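/- arXiv:1504.06344 — 6 statements merged into one kernel-verified Lean document; each statement's English description precedes it below -/
import Mathlib

section
/- If G is a forest on n vertices with exactly i+1 connected components and G belongs to a bridge-addable class 𝒢 of graphs on n vertices, then the number of graphs in 𝒢 with exactly i+1 components, multiplied by i, is at most the number of graphs in 𝒢 with exactly i components. That is, i·|𝒢^(i+1)| ≤ |𝒢^(i)| for all i ≥ 1. -/
open SimpleGraph

/-- Number of connected components of a graph. -/
noncomputable def numComponents {n : ℕ} (G : SimpleGraph (Fin n)) : ℕ := Nat.card G.ConnectedComponent

/-- A class of graphs on `Fin n` is bridge-addable if adding any edge between two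
vertices lying in different connected components of a member stays in the class. -/
def BridgeAddable {n : ℕ} (𝒢 : Set (SimpleGraph (Fin n))) : Prop :=
  ∀ G ∈ 𝒢, ∀ u v : Fin n, ¬ G.Reachable u v →
    G ⊔ SimpleGraph.fromEdgeSet {s(u, v)} ∈ 𝒢

/-- `𝒢^(i)`: members of the class with exactly `i` connected components. -/
noncomputable def compCount {n : ℕ} (𝒢 : Set (SimpleGraph (Fin n))) (i : ℕ) : ℕ :=
  {G ∈ 𝒢 | numComponents G = i}.ncard

section Aux

/-- The edge-requiring notion of bridge (as `IsBridge` was formerly defined in Mathlib). -/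
def SimpleGraph.IsBridgeOld {V : Type*} (G : SimpleGraph V) (e : Sym2 V) : Prop :=
  e ∈ G.edgeSet ∧ G.IsBridge e

lemma isBridgeOld_iff {V : Type*} {G : SimpleGraph V} {u v : V} :
    G.IsBridgeOld s(u, v) ↔ G.Adj u v ∧ ¬(G \ fromEdgeSet {s(u, v)}).Reachable u v := Iff.rfl

lemma edge_eq {V : Type*} (u v : V) : edge u v = fromEdgeSet {s(u, v)} := rfl


variable {V : Type*}

lemma reach_of_walk_sup_edge {G : SimpleGraph V} {u v x y : V}
    (w : (G ⊔ edge u v).Walk x y) :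
    G.Reachable x y ∨ (G.Reachable x u ∧ G.Reachable v y) ∨
      (G.Reachable x v ∧ G.Reachable u y) := by
  induction w with
  | nil => exact Or.inl (Reachable.refl _)
  | @cons a b c hab p ih =>
    rcases (sup_adj _ _ _ _).mp hab with h | h
    · rcases ih with h1 | ⟨h1, h2⟩ | ⟨h1, h2⟩
      · exact Or.inl (h.reachable.trans h1)
      · exact Or.inr (Or.inl ⟨h.reachable.trans h1, h2⟩)
      · exact Or.inr (Or.inr ⟨h.reachable.trans h1, h2⟩)
    · rw [edge_adj] at h
      rcases h.1 with ⟨rfl, rfl⟩ | ⟨rfl, rfl⟩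
      · rcases ih with h1 | ⟨h1, h2⟩ | ⟨h1, h2⟩
        · exact Or.inr (Or.inl ⟨Reachable.refl _, h1⟩)
        · exact Or.inr (Or.inl ⟨Reachable.refl _, h2⟩)
        · exact Or.inl h2
      · rcases ih with h1 | ⟨h1, h2⟩ | ⟨h1, h2⟩
        · exact Or.inr (Or.inr ⟨Reachable.refl _, h1⟩)
        · exact Or.inl h2
        · exact Or.inr (Or.inr ⟨Reachable.refl _, h2⟩)

lemma adj_sup_edge {G : SimpleGraph V} {u v : V} (hne : u ≠ v) : (G ⊔ edge u v).Adj u v :=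
  (sup_adj _ _ _ _).mpr (Or.inr ((edge_adj u v u v).mpr ⟨Or.inl ⟨rfl, rfl⟩, hne⟩))

lemma card_cc_sup_edge [Finite V] {G : SimpleGraph V} {u v : V} (huv : ¬ G.Reachable u v) :
    Nat.card G.ConnectedComponent = Nat.card (G ⊔ edge u v).ConnectedComponent + 1 := by
  classical
  have hne : u ≠ v := fun h => huv (h ▸ Reachable.refl u)
  set H := G ⊔ edge u v with hH
  set φ : G →g H := Hom.ofLE le_sup_left with hφ
  set cv := G.connectedComponentMk v with hcv
  set f : {c : G.ConnectedComponent // c ≠ cv} → H.ConnectedComponent :=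
    fun c => c.1.map φ with hf
  have hmk : ∀ x : V, (G.connectedComponentMk x).map φ = H.connectedComponentMk x :=
    fun x => rfl
  have hinj : Function.Injective f := by
    rintro ⟨c, hc⟩ ⟨c', hc'⟩ hcc
    refine Subtype.ext ?_
    revert hc hc' hcc
    refine ConnectedComponent.ind₂ (fun x y hc hc' hcc => ?_) c c'
    simp only [hf, hmk] at hcc
    have hr : H.Reachable x y := ConnectedComponent.exact hcc
    obtain ⟨w⟩ := hr
    rcases reach_of_walk_sup_edge w with h1 | ⟨h1, h2⟩ | ⟨h1, h2⟩
    · exact ConnectedComponent.sound h1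
    · exact absurd (ConnectedComponent.sound h2.symm) hc'
    · exact absurd (ConnectedComponent.sound h1) hc
  have hsurj : Function.Surjective f := by
    refine ConnectedComponent.ind (fun x => ?_)
    by_cases hx : G.connectedComponentMk x = cv
    · have hcu : G.connectedComponentMk u ≠ cv := fun h => huv (ConnectedComponent.exact h)
      refine ⟨⟨_, hcu⟩, ?_⟩
      show (G.connectedComponentMk u).map φ = H.connectedComponentMk x
      rw [hmk]
      refine ConnectedComponent.sound ?_
      have h1 : H.Reachable u v := (adj_sup_edge hne).reachable
      have h2 : G.Reachable v x := ConnectedComponent.exact (hcv ▸ hx.symm)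
      exact h1.trans (h2.mono le_sup_left)
    · exact ⟨⟨_, hx⟩, rfl⟩
  letI := Fintype.ofFinite G.ConnectedComponent
  letI := Fintype.ofFinite H.ConnectedComponent
  have hcard : Fintype.card H.ConnectedComponent
      = Fintype.card {c : G.ConnectedComponent // c ≠ cv} :=
    (Fintype.card_of_bijective ⟨hinj, hsurj⟩).symm
  have h1 : Fintype.card {c : G.ConnectedComponent // c ≠ cv}
      = Fintype.card G.ConnectedComponent - 1 := by
    rw [Fintype.card_subtype_compl, Fintype.card_subtype_eq]
  have h2 : 1 ≤ Fintype.card G.ConnectedComponent :=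
    @Fintype.card_pos _ _ ⟨G.connectedComponentMk v⟩
  rw [Nat.card_eq_fintype_card, Nat.card_eq_fintype_card, hcard, h1]
  omega

lemma numComp_le_card [Finite V] (H : SimpleGraph V) :
    Nat.card H.ConnectedComponent ≤ Nat.card V :=
  Nat.card_le_card_of_surjective H.connectedComponentMk
    (fun d => d.ind (fun w => ⟨w, rfl⟩))

lemma sup_sdiff_edge {H : SimpleGraph V} {u v : V} (huv : H.Adj u v) :
    (H \ fromEdgeSet {s(u, v)}) ⊔ edge u v = H := by
  ext a b
  simp only [sup_adj, sdiff_adj, edge_adj, fromEdgeSet_adj, Set.mem_singleton_iff]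
  constructor
  · rintro (⟨h, -⟩ | ⟨⟨rfl, rfl⟩ | ⟨rfl, rfl⟩, -⟩)
    · exact h
    · exact huv
    · exact huv.symm
  · intro hab
    by_cases he : s(a, b) = s(u, v)
    · rw [Sym2.eq_iff] at he
      exact Or.inr ⟨he, hab.ne⟩
    · exact Or.inl ⟨hab, fun h => he h.1⟩

lemma isBridge_sdiff {H : SimpleGraph V} {e e' : Sym2 V} (hne : e' ≠ e)
    (hb : H.IsBridgeOld e') : (H \ fromEdgeSet {e}).IsBridgeOld e' := by
  induction e' using Sym2.ind with
  | _ x y =>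
    rw [isBridgeOld_iff] at hb ⊢
    refine ⟨?_, fun hr => hb.2 (hr.mono ?_)⟩
    · rw [sdiff_adj]
      refine ⟨hb.1, ?_⟩
      rw [fromEdgeSet_adj]
      rintro ⟨h1, -⟩
      exact hne (h1 ▸ rfl)
    · intro a b hab
      rw [sdiff_adj] at hab ⊢
      rw [sdiff_adj] at hab
      exact ⟨hab.1.1, hab.2⟩

lemma bridges_ncard_le [Finite V] :
    ∀ (m : ℕ) (H : SimpleGraph V), Nat.card V - Nat.card H.ConnectedComponent ≤ m →
      {e | H.IsBridgeOld e}.ncard ≤ Nat.card V - Nat.card H.ConnectedComponent := by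
  intro m
  induction m with
  | zero =>
    intro H hm
    have hc : Nat.card H.ConnectedComponent = Nat.card V :=
      le_antisymm (numComp_le_card H) (by omega)
    have : {e | H.IsBridgeOld e} = ∅ := by
      ext e
      simp only [Set.mem_setOf_eq, Set.mem_empty_iff_false, iff_false]
      intro hb
      induction e using Sym2.ind with
      | _ x y =>
        have hadj : H.Adj x y := hb.1
        letI := Fintype.ofFinite V
        letI := Fintype.ofFinite H.ConnectedComponent
        have hsurj : Function.Surjective H.connectedComponentMk :=
          fun d => d.ind (fun w => ⟨w, rfl⟩)
        have hbij : Function.Bijective H.connectedComponentMk :=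
          (Fintype.bijective_iff_surjective_and_card _).mpr
            ⟨hsurj, by simpa [Nat.card_eq_fintype_card] using hc.symm⟩
        have := hbij.1 (ConnectedComponent.sound hadj.reachable)
        exact hadj.ne this
    rw [this]
    simp
  | succ m ih =>
    intro H hm
    by_cases hb : {e | H.IsBridgeOld e} = ∅
    · rw [hb]; simp
    · obtain ⟨e, he⟩ := Set.nonempty_iff_ne_empty.mpr hb
      induction e using Sym2.ind with
      | _ u v =>
        have hbe : H.IsBridgeOld s(u, v) := he
        rw [isBridgeOld_iff] at hbe
        set H' := H \ fromEdgeSet {s(u, v)} with hH'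
        have hsup : H' ⊔ edge u v = H := sup_sdiff_edge hbe.1
        have hcc : Nat.card H'.ConnectedComponent = Nat.card H.ConnectedComponent + 1 := by
          have := card_cc_sup_edge (G := H') (u := u) (v := v) hbe.2
          rwa [hsup] at this
        have hle : Nat.card H'.ConnectedComponent ≤ Nat.card V := numComp_le_card H'
        have hih := ih H' (by omega)
        have hsub : {e | H.IsBridgeOld e} ⊆ insert s(u, v) {e | H'.IsBridgeOld e} := by
          intro e' he'
          by_cases h : e' = s(u, v)
          · exact h ▸ Set.mem_insert _ _
          · exact Set.mem_insert_of_mem _ (isBridge_sdiff h he')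
        have hfin : ({e | H'.IsBridgeOld e} : Set (Sym2 V)).Finite := Set.toFinite _
        have := (Set.ncard_le_ncard hsub (hfin.insert _)).trans (Set.ncard_insert_le _ _)
        omega


lemma cross_count {n i : ℕ} (hi : 1 ≤ i) (G : SimpleGraph (Fin n))
    (hc : Nat.card G.ConnectedComponent = i + 1)
    (T : Finset (Fin n × Fin n)) (hT : ∀ p : Fin n × Fin n, p ∈ T ↔ ¬ G.Reachable p.1 p.2) :
    2 * i * (n - i) ≤ T.card := by
  classical
  letI := Fintype.ofFinite G.ConnectedComponent
  set f := G.connectedComponentMk with hf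
  have hk : Fintype.card G.ConnectedComponent = i + 1 := by
    rwa [← Nat.card_eq_fintype_card]
  set a : G.ConnectedComponent → ℕ := fun c => (Finset.univ.filter fun x => f x = c).card
    with ha
  -- fiber decomposition of T over the component of the first coordinate
  have hTcard : T.card = ∑ c : G.ConnectedComponent, a c * (n - a c) := by
    rw [Finset.card_eq_sum_card_fiberwise (f := fun p : Fin n × Fin n => f p.1)
      (t := Finset.univ) (fun x _ => Finset.mem_univ _)]
    refine Finset.sum_congr rfl (fun c _ => ?_)
    have hTc : T.filter (fun p => f p.1 = c)
        = (Finset.univ.filter fun x => f x = c) ×ˢ (Finset.univ.filter fun x => f x = c)ᶜ := by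
      ext ⟨x, y⟩
      simp only [Finset.mem_filter, Finset.mem_product, Finset.mem_univ, true_and, hT,
        Finset.mem_compl]
      constructor
      · rintro ⟨hr, hfx⟩
        refine ⟨hfx, fun hfy => hr ?_⟩
        exact ConnectedComponent.exact (hfx.trans hfy.symm)
      · rintro ⟨hfx, hfy⟩
        exact ⟨fun hr => hfy ((ConnectedComponent.sound hr).symm.trans hfx), hfx⟩
    rw [hTc, Finset.card_product, Finset.card_compl, Fintype.card_fin]
  -- each class is nonempty
  have hpos : ∀ c, 1 ≤ a c := by
    refine ConnectedComponent.ind (fun x => ?_)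
    refine Finset.card_pos.mpr ⟨x, ?_⟩
    simp [ha, hf]
  -- total sum is n
  have hsum : ∑ c : G.ConnectedComponent, a c = n := by
    rw [← Finset.card_eq_sum_card_fiberwise (f := f) (t := Finset.univ)
      (fun x _ => Finset.mem_univ _)]
    simp
  have hac_le : ∀ c, a c ≤ n := fun c =>
    hsum ▸ Finset.single_le_sum (fun _ _ => Nat.zero_le _) (Finset.mem_univ c)
  -- each complement has at least i vertices
  have hcompl : ∀ c, i ≤ n - a c := by
    intro c
    have h1 : a c + ∑ c' ∈ Finset.univ.erase c, a c' = n := by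
      rw [Finset.add_sum_erase _ _ (Finset.mem_univ c)]; exact hsum
    have h2 : (Finset.univ.erase c).card • 1 ≤ ∑ c' ∈ Finset.univ.erase c, a c' :=
      Finset.card_nsmul_le_sum _ _ _ (fun x _ => hpos x)
    have h3 : (Finset.univ.erase c).card = i := by
      rw [Finset.card_erase_of_mem (Finset.mem_univ c), Finset.card_univ, hk]
      omega
    simp only [smul_eq_mul, mul_one, h3] at h2
    omega
  have hn : i + 1 ≤ n := by
    have h2 : (Finset.univ : Finset G.ConnectedComponent).card • 1
        ≤ ∑ c, a c := Finset.card_nsmul_le_sum _ _ _ (fun x _ => hpos x)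
    simp only [smul_eq_mul, mul_one, Finset.card_univ, hk, hsum] at h2
    exact h2
  -- termwise lower bound
  have hterm : ∀ c, (a c - 1) * i + (n - a c) ≤ a c * (n - a c) := by
    intro c
    obtain ⟨x, hx⟩ : ∃ x, a c = x + 1 := ⟨a c - 1, by have := hpos c; omega⟩
    have h5 := hcompl c
    rw [hx] at h5 ⊢
    simp only [Nat.add_sub_cancel, add_mul, one_mul]
    exact Nat.add_le_add_right (Nat.mul_le_mul_left x h5) _
  have hlow : ∑ c, ((a c - 1) * i + (n - a c)) ≤ T.card := by
    rw [hTcard]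
    exact Finset.sum_le_sum (fun c _ => hterm c)
  -- compute the lower bound sum
  have hsplit : ∑ c, ((a c - 1) * i + (n - a c))
      = (∑ c, (a c - 1)) * i + (∑ c, (n - a c)) := by
    rw [Finset.sum_add_distrib, Finset.sum_mul]
  have hs1 : ∑ c, (a c - 1) = n - (i + 1) := by
    have h5 : ∑ c, (a c - 1) = (∑ c, a c) - (∑ c, (1 : ℕ)) :=
      Finset.sum_tsub_distrib Finset.univ (fun c _ => hpos c)
    simpa [hsum, hk] using h5
  have hs2 : ∑ c, (n - a c) = (i + 1) * n - n := by
    have h5 : ∑ c, (n - a c) = (∑ _c : G.ConnectedComponent, n) - (∑ c, a c) :=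
      Finset.sum_tsub_distrib Finset.univ (fun c _ => hac_le c)
    simpa [hsum, hk, Finset.sum_const, Finset.card_univ, mul_comm] using h5
  -- final arithmetic
  refine le_trans ?_ hlow
  rw [hsplit, hs1, hs2]
  obtain ⟨d, hd⟩ : ∃ d, n = i + 1 + d := ⟨n - (i + 1), by omega⟩
  subst hd
  have e1 : i + 1 + d - (i + 1) = d := by omega
  have e2 : i + 1 + d - i = d + 1 := by omega
  have e3 : (i + 1) * (i + 1 + d) - (i + 1 + d) = i * (i + 1 + d) := by
    rw [add_one_mul]; omega
  rw [e1, e2, e3]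
  nlinarith [hi]

end Aux

/-- For a bridge-addable class `𝒢` on `n` vertices, `i·|𝒢^(i+1)| ≤ |𝒢^(i)|` for all `i ≥ 1`. -/
theorem stmt0 {n : ℕ} (𝒢 : Set (SimpleGraph (Fin n))) (h : BridgeAddable 𝒢)
    (i : ℕ) (hi : 1 ≤ i) :
    i * compCount 𝒢 (i + 1) ≤ compCount 𝒢 i := by
  classical
  -- trivial case: no graph on `n` vertices has more than `n` components
  by_cases hni : n ≤ i
  · have hA0 : compCount 𝒢 (i + 1) = 0 := by
      have hempty : {G ∈ 𝒢 | numComponents G = i + 1} = (∅ : Set (SimpleGraph (Fin n))) := by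
        ext G
        simp only [Set.mem_setOf_eq, Set.mem_empty_iff_false, iff_false, not_and]
        intro _ hcc
        have h1 := numComp_le_card (V := Fin n) G
        have h2 : Nat.card (Fin n) = n := by simp
        rw [numComponents] at hcc
        omega
      rw [compCount, hempty, Set.ncard_empty]
    simp [hA0]
  push_neg at hni
  letI : Fintype (SimpleGraph (Fin n)) := Fintype.ofFinite _
  set setA : Set (SimpleGraph (Fin n)) := {G | G ∈ 𝒢 ∧ numComponents G = i + 1} with hsetA
  set setB : Set (SimpleGraph (Fin n)) := {G | G ∈ 𝒢 ∧ numComponents G = i} with hsetB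
  have hAfin : setA.Finite := Set.toFinite _
  have hBfin : setB.Finite := Set.toFinite _
  set FA := hAfin.toFinset with hFA
  set FB := hBfin.toFinset with hFB
  have hcA : compCount 𝒢 (i + 1) = FA.card := by
    rw [compCount, Set.ncard_eq_toFinset_card _ hAfin]
  have hcB : compCount 𝒢 i = FB.card := by
    rw [compCount, Set.ncard_eq_toFinset_card _ hBfin]
  set S : Finset (SimpleGraph (Fin n) × Fin n × Fin n) :=
    Finset.univ.filter (fun t => (t.1 ∈ 𝒢 ∧ numComponents t.1 = i + 1) ∧
      ¬ t.1.Reachable t.2.1 t.2.2) with hS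
  -- lower bound on |S|
  have hlower : FA.card * (2 * i * (n - i)) ≤ S.card := by
    rw [Finset.card_eq_sum_card_fiberwise (f := fun t : SimpleGraph (Fin n) × Fin n × Fin n => t.1) (t := FA)
      (by
        intro t ht
        rw [Finset.mem_coe, hS, Finset.mem_filter] at ht
        rw [Finset.mem_coe, hFA, Set.Finite.mem_toFinset]
        exact ht.2.1)]
    have : FA.card • (2 * i * (n - i)) ≤ ∑ G ∈ FA, (S.filter (fun t => t.1 = G)).card := by
      refine Finset.card_nsmul_le_sum _ _ _ (fun G hG => ?_)
      rw [hFA, Set.Finite.mem_toFinset] at hG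
      set TG : Finset (Fin n × Fin n) :=
        Finset.univ.filter (fun p : Fin n × Fin n => ¬ G.Reachable p.1 p.2) with hTG
      have h1 : 2 * i * (n - i) ≤ TG.card := by
        refine cross_count hi G ?_ TG (fun p => by simp [hTG])
        have := hG.2
        rwa [numComponents] at this
      refine h1.trans ?_
      refine Finset.card_le_card_of_injOn (fun p => (G, p)) (fun p hp => ?_) ?_
      · rw [Finset.mem_coe, hTG, Finset.mem_filter] at hp
        rw [Finset.mem_coe, Finset.mem_filter, hS, Finset.mem_filter]
        exact ⟨⟨Finset.mem_univ _, ⟨hG.1, hG.2⟩, hp.2⟩, rfl⟩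
      · intro p _ q _ hpq
        exact (Prod.mk.injEq _ _ _ _).mp hpq |>.2
    simpa using this
  -- upper bound on |S|
  have hupper : S.card ≤ FB.card * (2 * (n - i)) := by
    rw [Finset.card_eq_sum_card_fiberwise (f := fun t : SimpleGraph (Fin n) × Fin n × Fin n => t.1 ⊔ edge t.2.1 t.2.2) (t := FB)
      (by
        intro t ht
        rw [Finset.mem_coe, hS, Finset.mem_filter] at ht
        obtain ⟨-, ⟨hmem, hcc⟩, hr⟩ := ht
        rw [Finset.mem_coe, hFB, Set.Finite.mem_toFinset]
        constructor
        · have := h t.1 hmem t.2.1 t.2.2 hr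
          rwa [← edge_eq] at this
        · show numComponents (t.1 ⊔ edge t.2.1 t.2.2) = i
          have hcard := card_cc_sup_edge (G := t.1) (u := t.2.1) (v := t.2.2) hr
          rw [numComponents] at hcc ⊢
          omega)]
    refine Finset.sum_le_card_nsmul _ _ _ (fun H hH => ?_)
    rw [hFB, Set.Finite.mem_toFinset] at hH
    -- the fiber over H injects into ordered bridge pairs of H
    set DH : Finset (Fin n × Fin n) :=
      Finset.univ.filter (fun p : Fin n × Fin n => H.IsBridgeOld s(p.1, p.2)) with hDH
    have hfib : (S.filter (fun t => t.1 ⊔ edge t.2.1 t.2.2 = H)).card ≤ DH.card := by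
      refine Finset.card_le_card_of_injOn (fun t => t.2) ?_ ?_
      · rintro ⟨G, u, v⟩ ht
        rw [Finset.mem_coe, Finset.mem_filter, hS, Finset.mem_filter] at ht
        obtain ⟨⟨-, ⟨-, -⟩, hr⟩, hsup⟩ := ht
        simp only at hsup hr
        have hne : u ≠ v := fun huv => hr (huv ▸ Reachable.refl u)
        rw [Finset.mem_coe, hDH, Finset.mem_filter]
        refine ⟨Finset.mem_univ _, ?_⟩
        rw [isBridgeOld_iff]
        constructor
        · rw [← hsup]; exact adj_sup_edge hne
        · intro hreach
          refine hr (hreach.mono ?_)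
          intro a b hab
          rw [sdiff_adj, ← hsup, sup_adj, edge_eq] at hab
          rcases hab with ⟨hg | he, hne'⟩
          · exact hg
          · exact absurd he hne'
      · rintro ⟨G, u, v⟩ ht ⟨G', u', v'⟩ ht' heq
        simp only [Finset.coe_filter, Set.mem_setOf_eq, hS, Finset.mem_filter] at ht ht'
        obtain ⟨⟨-, ⟨-, -⟩, hr⟩, hsup⟩ := ht
        obtain ⟨⟨-, ⟨-, -⟩, hr'⟩, hsup'⟩ := ht'
        simp only at hsup hr hsup' hr' heq
        obtain ⟨hu, hv⟩ := Prod.ext_iff.mp heq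
        simp only at hu hv
        subst hu
        subst hv
        -- now show G = G' since both equal H minus the edge
        have key : ∀ K : SimpleGraph (Fin n), ¬ K.Reachable u v → K ⊔ edge u v = H →
            K = H \ fromEdgeSet {s(u, v)} := by
          intro K hKr hKsup
          have hKadj : ¬ K.Adj u v := fun hadj => hKr hadj.reachable
          ext a b
          rw [sdiff_adj, ← hKsup, sup_adj, edge_eq, fromEdgeSet_adj]
          constructor
          · intro hab
            refine ⟨Or.inl hab, ?_⟩
            rintro ⟨hab2, hne2⟩
            rw [Set.mem_singleton_iff, Sym2.eq_iff] at hab2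
            rcases hab2 with ⟨rfl, rfl⟩ | ⟨rfl, rfl⟩
            · exact hKadj hab
            · exact hKadj hab.symm
          · rintro ⟨hg | he, hne2⟩
            · exact hg
            · exact absurd he hne2
        have e1 := key G hr hsup
        have e2 := key G' hr' hsup'
        rw [Prod.mk.injEq]
        exact ⟨e1.trans e2.symm, rfl⟩
    refine hfib.trans ?_
    -- ordered bridge pairs count at most 2 (n - i)
    have hbfin : ({e | H.IsBridgeOld e} : Set (Sym2 (Fin n))).Finite := Set.toFinite _
    have hDH2 : DH.card ≤ 2 * hbfin.toFinset.card := by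
      rw [Finset.card_eq_sum_card_fiberwise (f := fun p : Fin n × Fin n => s(p.1, p.2))
        (t := hbfin.toFinset)
        (by
          intro p hp
          rw [Finset.mem_coe, hDH, Finset.mem_filter] at hp
          rw [Finset.mem_coe, Set.Finite.mem_toFinset]
          exact hp.2)]
      rw [mul_comm, ← smul_eq_mul]
      refine Finset.sum_le_card_nsmul _ _ _ (fun e he => ?_)
      induction e using Sym2.ind with
      | _ a b =>
        have hsub : DH.filter (fun p => s(p.1, p.2) = s(a, b)) ⊆ {(a, b), (b, a)} := by
          intro p hp
          rw [Finset.mem_filter] at hp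
          rw [Sym2.eq_iff] at hp
          rcases hp.2 with ⟨h1, h2⟩ | ⟨h1, h2⟩
          · simp [Finset.mem_insert, ← h1, ← h2]
          · simp [Finset.mem_insert, ← h1, ← h2, Prod.ext_iff]
        refine (Finset.card_le_card hsub).trans ?_
        refine (Finset.card_insert_le _ _).trans ?_
        simp
    refine hDH2.trans ?_
    have hb := bridges_ncard_le (V := Fin n) (n - Nat.card H.ConnectedComponent) H (by simp)
    rw [Set.ncard_eq_toFinset_card _ hbfin] at hb
    have hcardV : Nat.card (Fin n) = n := by simp
    rw [hcardV] at hb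
    have hHcc : Nat.card H.ConnectedComponent = i := by
      have := hH.2; rwa [numComponents] at this
    rw [hHcc] at hb
    omega
  -- combine
  rw [hcA, hcB]
  have hfinal : (i * FA.card) * (2 * (n - i)) ≤ FB.card * (2 * (n - i)) := by
    calc (i * FA.card) * (2 * (n - i)) = FA.card * (2 * i * (n - i)) := by ring
    _ ≤ S.card := hlower
    _ ≤ FB.card * (2 * (n - i)) := hupper
  have hpos : 0 < 2 * (n - i) := by omega
  exact Nat.le_of_mul_le_mul_right hfinal hpos
end

section
/- Let T be a rooted unlabeled tree and e an edge of T whose removal splits T into the rooted component T₋ (containing the root, with attachment vertex v₋) and the unrooted component U₊ (with attachment vertex v₊). Then m_T(e)/Aut_r(T) = (m_{T₋}(v₋)·n_{U₊}(v₊))/(Aut_r(T₋)·Aut_u(U₊)), where m_T(e) is the number of edges of T in the orbit of e under root-preserving automorphisms of T, m_{T₋}(v₋) is the number of vertices of T₋ in the orbit of v₋ under root-preserving automorphisms of T₋, n_{U₊}(v₊) is the number of vertices of U₊ in the orbit of v₊ under automorphisms of U₊, Aut_r denotes the number of root-preserving automorphisms, and Aut_u the number of automorphisms of an unrooted tree.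 -/
open SimpleGraph Equiv MulAction

namespace Stmt4

variable {V : Type}


instance : MulAction (Perm V) (Sym2 V) where
  smul σ e := Sym2.map σ e
  one_smul e := by show Sym2.map _ e = e; simp
  mul_smul σ τ e := by
    show Sym2.map _ e = Sym2.map _ (Sym2.map _ e)
    simp [Sym2.map_map, Perm.coe_mul]

def aut (T : SimpleGraph V) : Subgroup (Perm V) where
  carrier := {σ | ∀ x y, T.Adj (σ x) (σ y) ↔ T.Adj x y}
  one_mem' := by intro x y; simp
  mul_mem' := by
    intro σ τ hσ hτ x y
    simp only [Set.mem_setOf_eq, Perm.mul_apply] at *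
    exact (hσ _ _).trans (hτ _ _)
  inv_mem' := by
    intro σ hσ x y
    have := hσ (σ⁻¹ x) (σ⁻¹ y)
    simpa using this.symm

lemma mem_aut {T : SimpleGraph V} {σ : Perm V} :
    σ ∈ aut T ↔ ∀ x y, T.Adj (σ x) (σ y) ↔ T.Adj x y := Iff.rfl

def raut (T : SimpleGraph V) (r : V) : Subgroup (Perm V) :=
  aut T ⊓ stabilizer (Perm V) r

lemma mem_raut {T : SimpleGraph V} {r : V} {σ : Perm V} :
    σ ∈ raut T r ↔ (∀ x y, T.Adj (σ x) (σ y) ↔ T.Adj x y) ∧ σ r = r := by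
  simp [raut, Subgroup.mem_inf, mem_aut, MulAction.mem_stabilizer_iff, Perm.smul_def]




def autEquiv (T : SimpleGraph V) : (T ≃g T) ≃ ↥(aut T) where
  toFun f := ⟨f.toEquiv, fun x y => f.map_adj_iff⟩
  invFun σ := ⟨σ.1, fun {x y} => σ.2 x y⟩
  left_inv f := rfl
  right_inv σ := rfl

def rautEquiv (T : SimpleGraph V) (r : V) : {f : T ≃g T // f r = r} ≃ ↥(raut T r) where
  toFun f := ⟨f.1.toEquiv, mem_raut.2 ⟨fun x y => f.1.map_adj_iff, f.2⟩⟩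
  invFun σ := ⟨⟨σ.1, fun {x y} => (mem_raut.1 σ.2).1 x y⟩, (mem_raut.1 σ.2).2⟩
  left_inv f := rfl
  right_inv σ := rfl



lemma cross {T : SimpleGraph V} {a b : V} {S : Set V}
    (hS : S = {w | (T.deleteEdges {s(a, b)}).Reachable a w}) (hbS : b ∉ S)
    {x y : V} (hx : x ∈ S) (hy : y ∉ S) (hxy : T.Adj x y) : x = a ∧ y = b := by
  by_cases h : s(x, y) = s(a, b)
  · rcases Sym2.eq_iff.1 h with ⟨rfl, rfl⟩ | ⟨rfl, rfl⟩
    · exact ⟨rfl, rfl⟩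
    · exact absurd hx hbS
  · exfalso
    apply hy
    rw [hS] at hx ⊢
    refine hx.trans (SimpleGraph.Adj.reachable ?_)
    rw [SimpleGraph.deleteEdges_adj]
    exact ⟨hxy, by simpa using h⟩

lemma autT' {T : SimpleGraph V} {a b : V} {σ : Perm V}
    (hadj : ∀ x y, T.Adj (σ x) (σ y) ↔ T.Adj x y)
    (he : Sym2.map σ s(a, b) = s(a, b)) :
    ∀ x y, (T.deleteEdges {s(a, b)}).Adj (σ x) (σ y) ↔ (T.deleteEdges {s(a, b)}).Adj x y := by
  intro x y
  have key : s(σ x, σ y) = s(a, b) ↔ s(x, y) = s(a, b) := by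
    have key := (Sym2.map.injective σ.injective).eq_iff (a := s(x, y)) (b := s(a, b))
    rw [Sym2.map_pair_eq, he] at key
    exact key
  simp only [SimpleGraph.deleteEdges_adj, Set.mem_singleton_iff]
  exact and_congr (hadj x y) (not_congr key)

lemma reach_map {T' : SimpleGraph V} {σ : Perm V}
    (h : ∀ x y, T'.Adj (σ x) (σ y) ↔ T'.Adj x y) {u v : V} (huv : T'.Reachable u v) :
    T'.Reachable (σ u) (σ v) := by
  let ι : T' ≃g T' := ⟨σ, h _ _⟩
  exact huv.map ι.toHom

lemma sigma_fixes {T : SimpleGraph V} {r a b : V} {S : Set V}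
    (hS : S = {w | (T.deleteEdges {s(a, b)}).Reachable a w})
    (hrS : r ∈ S) (hbS : b ∉ S)
    {σ : Perm V} (hadj : ∀ x y, T.Adj (σ x) (σ y) ↔ T.Adj x y)
    (hr : σ r = r) (he : Sym2.map σ s(a, b) = s(a, b)) :
    σ a = a ∧ σ b = b := by
  have h' := autT' hadj he
  have hmap : s(σ a, σ b) = s(a, b) := by rw [← Sym2.map_pair_eq]; exact he
  rcases Sym2.eq_iff.1 hmap with h | ⟨h1, h2⟩
  · exact h
  · exfalso
    apply hbS
    have hra : (T.deleteEdges {s(a, b)}).Reachable a r := by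
      have := hrS; rwa [hS] at this
    have h2' : (T.deleteEdges {s(a, b)}).Reachable (σ a) (σ r) := reach_map h' hra
    rw [h1, hr] at h2'
    rw [hS]
    exact hra.trans h2'.symm

lemma maps_S {T : SimpleGraph V} {a b : V} {S : Set V}
    (hS : S = {w | (T.deleteEdges {s(a, b)}).Reachable a w})
    {σ : Perm V} (hadj : ∀ x y, T.Adj (σ x) (σ y) ↔ T.Adj x y)
    (he : Sym2.map σ s(a, b) = s(a, b)) (ha : σ a = a) :
    ∀ x ∈ S, σ x ∈ S := by
  intro x hx
  rw [hS] at hx ⊢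
  have := reach_map (autT' hadj he) hx
  rwa [ha] at this

lemma memS_iff {T : SimpleGraph V} {r a b : V} {S : Set V}
    (hS : S = {w | (T.deleteEdges {s(a, b)}).Reachable a w})
    (hrS : r ∈ S) (hbS : b ∉ S)
    {σ : Perm V} (hadj : ∀ x y, T.Adj (σ x) (σ y) ↔ T.Adj x y)
    (hr : σ r = r) (he : Sym2.map σ s(a, b) = s(a, b)) :
    ∀ x, x ∈ S ↔ σ x ∈ S := by
  obtain ⟨ha, hb⟩ := sigma_fixes hS hrS hbS hadj hr he
  have hinv_adj : ∀ x y, T.Adj (σ⁻¹ x) (σ⁻¹ y) ↔ T.Adj x y := fun x y => by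
    have := hadj (σ⁻¹ x) (σ⁻¹ y); simpa using this.symm
  have ha' : σ⁻¹ a = a := by conv_lhs => rw [← ha]; rw [Perm.inv_def, Equiv.symm_apply_apply]
  have hinv_e : Sym2.map ⇑σ⁻¹ s(a, b) = s(a, b) := by
    have hb' : σ⁻¹ b = b := by conv_lhs => rw [← hb]; rw [Perm.inv_def, Equiv.symm_apply_apply]
    rw [Sym2.map_pair_eq, ha', hb']
  intro x
  constructor
  · exact fun hx => maps_S hS hadj he ha x hx
  · intro hx
    have := maps_S hS hinv_adj hinv_e ha' (σ x) hx
    simpa using this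

lemma stab_card {T : SimpleGraph V} {r a b : V} (hab : T.Adj a b) {S : Set V}
    (hS : S = {w | (T.deleteEdges {s(a, b)}).Reachable a w})
    (hrS : r ∈ S) (haS : a ∈ S) (hbS : b ∈ Sᶜ) :
    Nat.card ↥(stabilizer ↥(raut T r) s(a, b)) =
      Nat.card ↥(stabilizer ↥(raut (T.induce S) ⟨r, hrS⟩) (⟨a, haS⟩ : S)) *
        Nat.card ↥(stabilizer ↥(aut (T.induce Sᶜ)) (⟨b, hbS⟩ : ↥(Sᶜ))) := by
  classical
  have hbS' : b ∉ S := hbS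
  rw [← Nat.card_prod]
  refine Nat.card_eq_of_bijective (fun g =>
    have hadj : ∀ x y, T.Adj (g.1.1 x) (g.1.1 y) ↔ T.Adj x y := (mem_raut.1 g.1.2).1
    have hr : g.1.1 r = r := (mem_raut.1 g.1.2).2
    have he : Sym2.map ⇑(g.1.1) s(a, b) = s(a, b) := g.2
    have hiff : ∀ x, x ∈ S ↔ g.1.1 x ∈ S := memS_iff hS hrS hbS' hadj hr he
    have hfix : g.1.1 a = a ∧ g.1.1 b = b := sigma_fixes hS hrS hbS' hadj hr he
    (⟨⟨(g.1.1).subtypePerm (fun x => (hiff x).symm),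
        mem_raut.2 ⟨fun u v => hadj u v, Subtype.ext hr⟩⟩,
      Subtype.ext hfix.1⟩,
     ⟨⟨(g.1.1).subtypePerm (fun x => not_congr (hiff x).symm),
        fun u v => hadj u v⟩,
      Subtype.ext hfix.2⟩)) ⟨?_, ?_⟩
  · -- injective
    intro g g' h
    apply Subtype.ext
    apply Subtype.ext
    apply Equiv.ext
    intro x
    by_cases hx : x ∈ S
    · have h1 := congrArg (fun p => ((p.1.1 : Perm ↥S) ⟨x, hx⟩ : V)) h
      exact h1
    · have h1 := congrArg (fun p => ((p.2.1 : Perm ↥(Sᶜ)) ⟨x, hx⟩ : V)) h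
      exact h1
  · -- surjective
    rintro ⟨⟨⟨τ, hτmem⟩, hτstab⟩, ⟨⟨ρ, hρmem⟩, hρstab⟩⟩
    have hτadj : ∀ u v, (T.induce S).Adj (τ u) (τ v) ↔ (T.induce S).Adj u v :=
      (mem_raut.1 hτmem).1
    have hτr : τ ⟨r, hrS⟩ = ⟨r, hrS⟩ := (mem_raut.1 hτmem).2
    have hτa : τ ⟨a, haS⟩ = ⟨a, haS⟩ := hτstab
    have hρadj : ∀ u v, (T.induce Sᶜ).Adj (ρ u) (ρ v) ↔ (T.induce Sᶜ).Adj u v := hρmem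
    have hρb : ρ ⟨b, hbS⟩ = ⟨b, hbS⟩ := hρstab
    set π : Perm V := Perm.subtypeCongr τ ρ with hπ
    have hπS : ∀ (x : V) (hx : x ∈ S), π x = ↑(τ ⟨x, hx⟩) := fun x hx =>
      Perm.subtypeCongr.left_apply τ ρ hx
    have hπC : ∀ (x : V) (hx : x ∉ S), π x = ↑(ρ ⟨x, hx⟩) := fun x hx =>
      Perm.subtypeCongr.right_apply τ ρ hx
    have hπr : π r = r := by rw [hπS r hrS, hτr]
    have hπa : π a = a := by rw [hπS a haS, hτa]
    have hπb : π b = b := by rw [hπC b hbS', hρb]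
    have hmemS : ∀ (x : V) (hx : x ∈ S), π x ∈ S := fun x hx => by
      rw [hπS x hx]; exact (τ ⟨x, hx⟩).2
    have hmemC : ∀ (x : V) (hx : x ∉ S), π x ∉ S := fun x hx => by
      rw [hπC x hx]; exact (ρ ⟨x, hx⟩).2
    have hcase : ∀ x y, x ∈ S → y ∉ S → (T.Adj (π x) (π y) ↔ T.Adj x y) := by
      intro x y hx hy
      constructor
      · intro h
        obtain ⟨h1, h2⟩ := cross hS hbS' (hmemS x hx) (hmemC y hy) h
        have hx' : x = a := by
          have : π x = π a := by rw [h1, hπa]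
          exact π.injective this
        have hy' : y = b := by
          have : π y = π b := by rw [h2, hπb]
          exact π.injective this
        rw [hx', hy']; exact hab
      · intro h
        obtain ⟨h1, h2⟩ := cross hS hbS' hx hy h
        rw [h1, h2, hπa, hπb]; exact hab
    have hπadj : ∀ x y, T.Adj (π x) (π y) ↔ T.Adj x y := by
      intro x y
      by_cases hx : x ∈ S <;> by_cases hy : y ∈ S
      · rw [hπS x hx, hπS y hy]
        exact hτadj ⟨x, hx⟩ ⟨y, hy⟩
      · exact hcase x y hx hy
      · exact ⟨fun h => ((hcase y x hy hx).1 h.symm).symm,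
          fun h => ((hcase y x hy hx).2 h.symm).symm⟩
      · rw [hπC x hx, hπC y hy]
        exact hρadj ⟨x, hx⟩ ⟨y, hy⟩
    have hπe : Sym2.map ⇑π s(a, b) = s(a, b) := by
      rw [Sym2.map_pair_eq, hπa, hπb]
    refine ⟨⟨⟨π, mem_raut.2 ⟨hπadj, hπr⟩⟩, hπe⟩, ?_⟩
    refine Prod.ext (Subtype.ext (Subtype.ext (Equiv.ext fun u => Subtype.ext ?_)))
      (Subtype.ext (Subtype.ext (Equiv.ext fun u => Subtype.ext ?_)))
    · show π ↑u = ↑(τ u)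
      rw [hπS ↑u u.2]
    · show π ↑u = ↑(ρ u)
      rw [hπC ↑u u.2]


end Stmt4

open Stmt4 MulAction in
/-- Dissymmetry identity for automorphism orbit sizes: if removing the edge `{a,b}` of the
tree `T` rooted at `r` leaves the root-side component on vertex set `S` (containing `a`) and
the other component on `Sᶜ` (containing `b`), then
`m_T(e)/Aut_r(T) = m_{T₋}(v₋)·n_{U₊}(v₊)/(Aut_r(T₋)·Aut_u(U₊))`. -/
theorem stmt4 {V : Type} [Fintype V] [DecidableEq V]
    (T : SimpleGraph V) (hT : T.IsTree) (r a b : V) (hab : T.Adj a b)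
    (S : Set V) (hS : S = {w | (T.deleteEdges {s(a, b)}).Reachable a w})
    (hrS : r ∈ S) (haS : a ∈ S) (hbS : b ∈ Sᶜ) :
    (Nat.card {e' : Sym2 V // ∃ f : T ≃g T, f r = r ∧ Sym2.map f s(a, b) = e'} : ℝ) /
        (Nat.card {f : T ≃g T // f r = r}) =
      ((Nat.card {v : S // ∃ f : T.induce S ≃g T.induce S,
            f ⟨r, hrS⟩ = ⟨r, hrS⟩ ∧ f ⟨a, haS⟩ = v}) *
        (Nat.card {v : ↥Sᶜ // ∃ f : T.induce Sᶜ ≃g T.induce Sᶜ, f ⟨b, hbS⟩ = v}) : ℝ) /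
      ((Nat.card {f : T.induce S ≃g T.induce S // f ⟨r, hrS⟩ = ⟨r, hrS⟩}) *
        (Nat.card (T.induce Sᶜ ≃g T.induce Sᶜ))) := by
  classical
  have h1 : Nat.card {e' : Sym2 V // ∃ f : T ≃g T, f r = r ∧ Sym2.map f s(a, b) = e'}
      = Nat.card ↥(orbit ↥(raut T r) s(a, b)) := by
    apply Nat.card_congr
    apply Equiv.subtypeEquivRight
    intro e'
    constructor
    · rintro ⟨f, hfr, hfe⟩
      exact MulAction.mem_orbit_iff.2
        ⟨⟨f.toEquiv, mem_raut.2 ⟨fun x y => f.map_adj_iff, hfr⟩⟩, hfe⟩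
    · intro h
      obtain ⟨⟨σ, hσ⟩, hg⟩ := MulAction.mem_orbit_iff.1 h
      exact ⟨⟨σ, fun {x y} => (mem_raut.1 hσ).1 x y⟩, (mem_raut.1 hσ).2, hg⟩
  have h2 : Nat.card {f : T ≃g T // f r = r} = Nat.card ↥(raut T r) :=
    Nat.card_congr (rautEquiv T r)
  have h3 : Nat.card {v : S // ∃ f : T.induce S ≃g T.induce S,
        f ⟨r, hrS⟩ = ⟨r, hrS⟩ ∧ f ⟨a, haS⟩ = v}
      = Nat.card ↥(orbit ↥(raut (T.induce S) ⟨r, hrS⟩) (⟨a, haS⟩ : S)) := by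
    apply Nat.card_congr
    apply Equiv.subtypeEquivRight
    intro v
    constructor
    · rintro ⟨f, hfr, hfa⟩
      exact MulAction.mem_orbit_iff.2
        ⟨⟨f.toEquiv, mem_raut.2 ⟨fun x y => f.map_adj_iff, hfr⟩⟩, hfa⟩
    · intro h
      obtain ⟨⟨σ, hσ⟩, hg⟩ := MulAction.mem_orbit_iff.1 h
      exact ⟨⟨σ, fun {x y} => (mem_raut.1 hσ).1 x y⟩, (mem_raut.1 hσ).2, hg⟩
  have h4 : Nat.card {v : ↥Sᶜ // ∃ f : T.induce Sᶜ ≃g T.induce Sᶜ, f ⟨b, hbS⟩ = v}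
      = Nat.card ↥(orbit ↥(aut (T.induce Sᶜ)) (⟨b, hbS⟩ : ↥Sᶜ)) := by
    apply Nat.card_congr
    apply Equiv.subtypeEquivRight
    intro v
    constructor
    · rintro ⟨f, hfb⟩
      exact MulAction.mem_orbit_iff.2 ⟨⟨f.toEquiv, fun x y => f.map_adj_iff⟩, hfb⟩
    · intro h
      obtain ⟨⟨σ, hσ⟩, hg⟩ := MulAction.mem_orbit_iff.1 h
      exact ⟨⟨σ, fun {x y} => hσ x y⟩, hg⟩
  have h5 : Nat.card {f : T.induce S ≃g T.induce S // f ⟨r, hrS⟩ = ⟨r, hrS⟩}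
      = Nat.card ↥(raut (T.induce S) ⟨r, hrS⟩) :=
    Nat.card_congr (rautEquiv (T.induce S) ⟨r, hrS⟩)
  have h6 : Nat.card (T.induce Sᶜ ≃g T.induce Sᶜ) = Nat.card ↥(aut (T.induce Sᶜ)) :=
    Nat.card_congr (autEquiv (T.induce Sᶜ))
  have hOSA : Nat.card ↥(raut T r)
      = Nat.card ↥(orbit ↥(raut T r) s(a, b)) *
        Nat.card ↥(stabilizer ↥(raut T r) s(a, b)) := by
    have := Nat.card_congr (MulAction.orbitProdStabilizerEquivGroup ↥(raut T r) s(a, b))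
    rw [Nat.card_prod] at this
    exact this.symm
  have hOSB : Nat.card ↥(raut (T.induce S) ⟨r, hrS⟩)
      = Nat.card ↥(orbit ↥(raut (T.induce S) ⟨r, hrS⟩) (⟨a, haS⟩ : S)) *
        Nat.card ↥(stabilizer ↥(raut (T.induce S) ⟨r, hrS⟩) (⟨a, haS⟩ : S)) := by
    have := Nat.card_congr
      (MulAction.orbitProdStabilizerEquivGroup ↥(raut (T.induce S) ⟨r, hrS⟩) (⟨a, haS⟩ : S))
    rw [Nat.card_prod] at this
    exact this.symm
  have hOSC : Nat.card ↥(aut (T.induce Sᶜ))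
      = Nat.card ↥(orbit ↥(aut (T.induce Sᶜ)) (⟨b, hbS⟩ : ↥Sᶜ)) *
        Nat.card ↥(stabilizer ↥(aut (T.induce Sᶜ)) (⟨b, hbS⟩ : ↥Sᶜ)) := by
    have := Nat.card_congr
      (MulAction.orbitProdStabilizerEquivGroup ↥(aut (T.induce Sᶜ)) (⟨b, hbS⟩ : ↥Sᶜ))
    rw [Nat.card_prod] at this
    exact this.symm
  have hstab := stab_card hab hS hrS haS hbS
  rw [hstab] at hOSA
  haveI : Nonempty ↥(orbit ↥(raut T r) s(a, b)) := ⟨⟨_, MulAction.mem_orbit_self _⟩⟩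
  haveI : Nonempty ↥(orbit ↥(raut (T.induce S) ⟨r, hrS⟩) (⟨a, haS⟩ : S)) :=
    ⟨⟨_, MulAction.mem_orbit_self _⟩⟩
  haveI : Nonempty ↥(orbit ↥(aut (T.induce Sᶜ)) (⟨b, hbS⟩ : ↥Sᶜ)) :=
    ⟨⟨_, MulAction.mem_orbit_self _⟩⟩
  have p1 : 0 < Nat.card ↥(orbit ↥(raut T r) s(a, b)) := Nat.card_pos
  have p2 : 0 < Nat.card ↥(orbit ↥(raut (T.induce S) ⟨r, hrS⟩) (⟨a, haS⟩ : S)) := Nat.card_pos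
  have p3 : 0 < Nat.card ↥(orbit ↥(aut (T.induce Sᶜ)) (⟨b, hbS⟩ : ↥Sᶜ)) := Nat.card_pos
  have p4 : 0 < Nat.card ↥(stabilizer ↥(raut (T.induce S) ⟨r, hrS⟩) (⟨a, haS⟩ : S)) :=
    Nat.card_pos
  have p5 : 0 < Nat.card ↥(stabilizer ↥(aut (T.induce Sᶜ)) (⟨b, hbS⟩ : ↥Sᶜ)) := Nat.card_pos
  rw [h1, h2, h3, h4, h5, h6, hOSA, hOSB, hOSC]
  push_cast
  have q1 : (0:ℝ) < Nat.card ↥(orbit ↥(raut T r) s(a, b)) := by exact_mod_cast p1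
  have q2 : (0:ℝ) < Nat.card ↥(orbit ↥(raut (T.induce S) ⟨r, hrS⟩) (⟨a, haS⟩ : S)) := by
    exact_mod_cast p2
  have q3 : (0:ℝ) < Nat.card ↥(orbit ↥(aut (T.induce Sᶜ)) (⟨b, hbS⟩ : ↥Sᶜ)) := by
    exact_mod_cast p3
  have q4 : (0:ℝ) < Nat.card ↥(stabilizer ↥(raut (T.induce S) ⟨r, hrS⟩) (⟨a, haS⟩ : S)) := by
    exact_mod_cast p4
  have q5 : (0:ℝ) < Nat.card ↥(stabilizer ↥(aut (T.induce Sᶜ)) (⟨b, hbS⟩ : ↥Sᶜ)) := by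
    exact_mod_cast p5
  rw [div_eq_div_iff (by positivity) (by positivity)]
  ring
end

section
/- Let 𝒢ₙ be a bridge-addable class of forests on n vertices, 𝒜ₙ its connected members (trees) and ℬₙ^U the members with exactly two components whose smallest component is isomorphic to the unrooted tree U. Then for any U of size u: u·(n − u)·|ℬₙ^U| ≤ n·|𝒜ₙ|. More generally, summing over all U of size greater than u_max: u_max·(n − u_max)·Σ_{|U| > u_max} |ℬₙ^U| ≤ n·|𝒜ₙ|. -/
open SimpleGraph

/-- `S` is the vertex set of the smallest connected component of `G` (the component of
smaller size, or the one containing vertex `1`, i.e. the vertex of index `0`, on ties). -/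
def IsSmallestComponent {n : ℕ} (G : SimpleGraph (Fin n)) (S : Set (Fin n)) : Prop :=
  (∃ v : Fin n, S = {w | G.Reachable v w}) ∧
  (2 * S.ncard < n ∨ (2 * S.ncard = n ∧ ∀ i : Fin n, (i : ℕ) = 0 → i ∈ S))


lemma adj_recover {n : ℕ} {G : SimpleGraph (Fin n)} {x y : Fin n} (h : ¬ G.Adj x y) (a b : Fin n) :
    G.Adj a b ↔ (G ⊔ fromEdgeSet {s(x,y)}).Adj a b ∧ s(a,b) ≠ s(x,y) := by
  simp only [sup_adj, fromEdgeSet_adj, Set.mem_singleton_iff]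
  constructor
  · intro hab
    refine ⟨Or.inl hab, fun he => ?_⟩
    rcases Sym2.eq_iff.mp he with ⟨rfl, rfl⟩ | ⟨rfl, rfl⟩
    · exact h hab
    · exact h hab.symm
  · rintro ⟨h1 | ⟨h1, h2⟩, hne⟩
    · exact h1
    · exact absurd h1 hne

lemma addEdge_connected {n : ℕ} {G : SimpleGraph (Fin n)}
    (h2 : Nat.card G.ConnectedComponent = 2) {x y : Fin n} (hr : ¬ G.Reachable x y) :
    (G ⊔ fromEdgeSet {s(x,y)}).Connected := by
  obtain ⟨a, b, hab, hU⟩ := Nat.card_eq_two_iff.mp h2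
  have hxy : x ≠ y := by rintro rfl; exact hr (Reachable.refl x)
  have hadj : (G ⊔ fromEdgeSet {s(x,y)}).Adj x y := by
    simp [fromEdgeSet_adj, hxy]
  have hle : G ≤ G ⊔ fromEdgeSet {s(x,y)} := le_sup_left
  have hmem : ∀ c : G.ConnectedComponent, c = a ∨ c = b := by
    intro c
    have : c ∈ ({a, b} : Set G.ConnectedComponent) := hU ▸ Set.mem_univ c
    simpa using this
  have hne : G.connectedComponentMk x ≠ G.connectedComponentMk y :=
    fun h => hr (ConnectedComponent.eq.mp h)
  have hcc : ∀ z : Fin n, G.Reachable x z ∨ G.Reachable y z := by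
    intro z
    rcases hmem (G.connectedComponentMk z) with hz | hz <;>
      rcases hmem (G.connectedComponentMk x) with hx' | hx' <;>
      rcases hmem (G.connectedComponentMk y) with hy' | hy' <;>
      first
      | exact absurd (hx'.trans hy'.symm) hne
      | exact Or.inl (ConnectedComponent.eq.mp (hx'.trans hz.symm))
      | exact Or.inr (ConnectedComponent.eq.mp (hy'.trans hz.symm))
  have H : ∀ w, (G ⊔ fromEdgeSet {s(x,y)}).Reachable x w := by
    intro w
    rcases hcc w with h | h
    · exact h.mono hle
    · exact hadj.reachable.trans (h.mono hle)
  haveI : Nonempty (Fin n) := ⟨x⟩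
  exact Connected.mk (fun w w' => (H w).symm.trans (H w'))

lemma main_count {n : ℕ} (𝒢 : Set (SimpleGraph (Fin n)))
    (hBA : ∀ G ∈ 𝒢, ∀ u v : Fin n, ¬ G.Reachable u v →
      G ⊔ SimpleGraph.fromEdgeSet {s(u, v)} ∈ 𝒢)
    (hforest : ∀ G ∈ 𝒢, G.IsAcyclic)
    (k : ℕ) (B : Set (SimpleGraph (Fin n)))
    (hB : ∀ G ∈ B, G ∈ 𝒢 ∧ Nat.card G.ConnectedComponent = 2 ∧
      ∃ S : Set (Fin n), (∃ v, S = {w | G.Reachable v w}) ∧ k ≤ S.ncard * (n - S.ncard)) :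
    k * B.ncard ≤ n * {G ∈ 𝒢 | G.Connected}.ncard := by
  classical
  haveI : Fintype (SimpleGraph (Fin n)) := Fintype.ofFinite _
  set A : Set (SimpleGraph (Fin n)) := {G ∈ 𝒢 | G.Connected} with hA
  have hAfin : A.Finite := Set.toFinite _
  have hBfin : B.Finite := Set.toFinite _
  -- chosen small component
  let SS : SimpleGraph (Fin n) → Set (Fin n) := fun G =>
    if h : ∃ S : Set (Fin n), (∃ v, S = {w | G.Reachable v w}) ∧ k ≤ S.ncard * (n - S.ncard)
    then h.choose else ∅
  have hSS : ∀ G ∈ B, (∃ v, SS G = {w | G.Reachable v w}) ∧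
      k ≤ (SS G).ncard * (n - (SS G).ncard) := by
    intro G hG
    have h := (hB G hG).2.2
    simp only [SS, dif_pos h]
    exact h.choose_spec
  let SF : SimpleGraph (Fin n) → Finset (Fin n) := fun G => Finset.univ.filter (· ∈ SS G)
  have hSFcard : ∀ G, (SF G).card = (SS G).ncard := by
    intro G
    rw [Set.ncard_eq_toFinset_card' (SS G)]
    congr 1
    ext z
    simp [SF]
  have hSFmem : ∀ G z, z ∈ SF G ↔ z ∈ SS G := by intro G z; simp [SF]
  let P : Finset (SimpleGraph (Fin n) × Fin n × Fin n) :=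
    hBfin.toFinset.biUnion (fun G => {G} ×ˢ (SF G ×ˢ (SF G)ᶜ))
  let Q : Finset (SimpleGraph (Fin n) × Sym2 (Fin n)) :=
    hAfin.toFinset.biUnion (fun T => {T} ×ˢ T.edgeFinset)
  have hmemP : ∀ p : SimpleGraph (Fin n) × Fin n × Fin n,
      p ∈ P ↔ p.1 ∈ B ∧ p.2.1 ∈ SS p.1 ∧ p.2.2 ∉ SS p.1 := by
    intro ⟨G, x, y⟩
    simp only [P, Finset.mem_biUnion, Set.Finite.mem_toFinset, Finset.mem_product,
      Finset.mem_singleton, Finset.mem_compl, hSFmem]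
    constructor
    · rintro ⟨G', hG', rfl, hx, hy⟩
      exact ⟨hG', hx, hy⟩
    · rintro ⟨hG, hx, hy⟩
      exact ⟨G, hG, rfl, hx, hy⟩
  -- lower bound on P.card
  have hPcard : k * B.ncard ≤ P.card := by
    rw [Finset.card_biUnion]
    · rw [Set.ncard_eq_toFinset_card B hBfin, mul_comm, ← smul_eq_mul]
      refine Finset.card_nsmul_le_sum _ _ _ ?_
      intro G hG
      rw [Finset.card_product, Finset.card_singleton, one_mul, Finset.card_product,
        Finset.card_compl, hSFcard, Fintype.card_fin]
      exact (hSS G (hBfin.mem_toFinset.mp hG)).2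
    · intro G hG G' hG' hne
      simp only [Finset.disjoint_left]
      rintro ⟨H, x, y⟩ h1 h2
      rw [Finset.mem_product, Finset.mem_singleton] at h1 h2
      exact hne (h1.1 ▸ h2.1 ▸ rfl)
  -- upper bound on Q.card
  have hQcard : Q.card ≤ n * A.ncard := by
    rw [Finset.card_biUnion]
    · rw [Set.ncard_eq_toFinset_card A hAfin, mul_comm, ← smul_eq_mul]
      refine Finset.sum_le_card_nsmul _ _ _ ?_
      intro T hT
      rw [Finset.card_product, Finset.card_singleton, one_mul]
      have hTA : T ∈ A := hAfin.mem_toFinset.mp hT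
      have hTree : T.IsTree := ⟨hTA.2, hforest T hTA.1⟩
      have := hTree.card_edgeFinset
      rw [Fintype.card_fin] at this
      omega
    · intro T hT T' hT' hne
      simp only [Finset.disjoint_left]
      rintro ⟨H, e⟩ h1 h2
      rw [Finset.mem_product, Finset.mem_singleton] at h1 h2
      exact hne (h1.1 ▸ h2.1 ▸ rfl)
  -- the injection
  have hPQ : P.card ≤ Q.card := by
    apply Finset.card_le_card_of_injOn
      (fun p => (p.1 ⊔ fromEdgeSet {s(p.2.1, p.2.2)}, s(p.2.1, p.2.2)))
    · rintro ⟨G, x, y⟩ hp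
      obtain ⟨hGB, hx, hy⟩ := (hmemP _).mp hp
      obtain ⟨⟨v, hv⟩, _⟩ := hSS G hGB
      rw [hv] at hx hy
      have hr : ¬ G.Reachable x y := fun h => hy (Set.mem_setOf.mp hx |>.trans h)
      have hmemG : G ⊔ fromEdgeSet {s(x, y)} ∈ 𝒢 := hBA G (hB G hGB).1 x y hr
      have hconn := addEdge_connected (hB G hGB).2.1 hr
      have hxy : x ≠ y := fun h => hr (h ▸ Reachable.refl x)
      simp only [Q, Finset.mem_coe, Finset.mem_biUnion, Set.Finite.mem_toFinset, Finset.mem_product,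
        Finset.mem_singleton]
      refine ⟨G ⊔ fromEdgeSet {s(x, y)}, ⟨hmemG, hconn⟩, rfl, ?_⟩
      rw [← Finset.mem_coe, SimpleGraph.coe_edgeFinset, mem_edgeSet]
      simp [fromEdgeSet_adj, hxy]
    · rintro ⟨G, x, y⟩ hp ⟨G', x', y'⟩ hp' heq
      rw [Finset.mem_coe] at hp hp'
      obtain ⟨hGB, hx, hy⟩ := (hmemP _).mp hp
      obtain ⟨hGB', hx', hy'⟩ := (hmemP _).mp hp'
      obtain ⟨⟨v, hv⟩, _⟩ := hSS G hGB
      obtain ⟨⟨v', hv'⟩, _⟩ := hSS G' hGB'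
      have hr : ¬ G.Reachable x y := by
        rw [hv] at hx hy
        exact fun h => hy (Set.mem_setOf.mp hx |>.trans h)
      have hr' : ¬ G'.Reachable x' y' := by
        rw [hv'] at hx' hy'
        exact fun h => hy' (Set.mem_setOf.mp hx' |>.trans h)
      have hE : s(x, y) = s(x', y') := congrArg Prod.snd heq
      have hT : G ⊔ fromEdgeSet {s(x, y)} = G' ⊔ fromEdgeSet {s(x', y')} :=
        congrArg Prod.fst heq
      have hGG' : G = G' := by
        ext a b
        rw [adj_recover (fun h => hr h.reachable) a b,
          adj_recover (fun h => hr' h.reachable) a b, hT, hE]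
      subst hGG'
      rcases Sym2.eq_iff.mp hE with ⟨rfl, rfl⟩ | ⟨rfl, rfl⟩
      · rfl
      · exact absurd hx hy'
  exact hPcard.trans (hPQ.trans hQcard)


lemma nat_quad {a b n : ℕ} (hab : a ≤ b) (habn : a + b ≤ n) :
    a * (n - a) ≤ b * (n - b) := by
  have ha : a ≤ n := by omega
  have hb : b ≤ n := by omega
  zify [ha, hb]
  nlinarith [mul_nonneg (by linarith : (0:ℤ) ≤ (b:ℤ) - a)
    (by linarith : (0:ℤ) ≤ (n:ℤ) - a - b)]

/-- For a bridge-addable class `𝒢` of forests on `n` vertices with connected members `𝒜`: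
`u(n-u)|ℬ^U| ≤ n|𝒜|` for each tree `U` on `u` vertices, where `ℬ^U` consists of the
two-component members whose smallest component is isomorphic to `U`; and, summing over all
`U` with more than `u_max` vertices, `u_max(n-u_max)·Σ_{|U|>u_max}|ℬ^U| ≤ n|𝒜|`. -/
theorem stmt8 {n : ℕ} (hn : 0 < n) (𝒢 : Set (SimpleGraph (Fin n)))
    (hBA : BridgeAddable 𝒢) (hforest : ∀ G ∈ 𝒢, G.IsAcyclic)
    (u : ℕ) (hu : u ≤ n) (U : SimpleGraph (Fin u)) (hU : U.IsTree)
    (umax : ℕ) (humax : umax ≤ n) :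
    u * (n - u) *
        {G ∈ 𝒢 | numComponents G = 2 ∧
          ∃ S : Set (Fin n), IsSmallestComponent G S ∧
            Nonempty ((G.induce S) ≃g U)}.ncard
      ≤ n * {G ∈ 𝒢 | G.Connected}.ncard ∧
    umax * (n - umax) *
        {G ∈ 𝒢 | numComponents G = 2 ∧
          ∃ S : Set (Fin n), IsSmallestComponent G S ∧ umax < S.ncard}.ncard
      ≤ n * {G ∈ 𝒢 | G.Connected}.ncard := by
  constructor
  · apply main_count 𝒢 hBA hforest
    rintro G ⟨hG, h2, S, ⟨⟨v, hv⟩, -⟩, ⟨e⟩⟩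
    refine ⟨hG, h2, S, ⟨v, hv⟩, ?_⟩
    have hcard : S.ncard = u := by
      rw [← Nat.card_coe_set_eq]
      rw [Nat.card_congr e.toEquiv, Nat.card_eq_fintype_card, Fintype.card_fin]
    rw [hcard]
  · apply main_count 𝒢 hBA hforest
    rintro G ⟨hG, h2, S, ⟨⟨v, hv⟩, hsm⟩, hlt⟩
    refine ⟨hG, h2, S, ⟨v, hv⟩, ?_⟩
    exact nat_quad hlt.le (by omega)
end

section
/- Assume that for every ε' > 0 there exists n₀ such that for every n ≥ n₀ and every bridge-addable class 𝒢ₙ of graphs on n vertices we have |𝒢ₙ^(2)| ≤ (1/2 + ε')|𝒢ₙ^(1)|. Then for all ε' > 0 and i₀ ≥ 1 there exists n₀ such that for all 1 ≤ i ≤ i₀ and n ≥ n₀ and every bridge-addable class 𝒢ₙ on n vertices: i·|𝒢ₙ^(i+1)| ≤ (1/2 + ε')·|𝒢ₙ^(i)|. -/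
open SimpleGraph

namespace BAaux

variable {n : ℕ}

/-- The vertex set of the component of `u`. -/
def csupp (G : SimpleGraph (Fin n)) (u : Fin n) : Set (Fin n) := {v | G.Reachable u v}

/-- Components (as vertex sets) having a representative in `S`. -/
def compsIn (G : SimpleGraph (Fin n)) (S : Set (Fin n)) : Set (Set (Fin n)) :=
  {A | ∃ u ∈ S, A = csupp G u}

/-- All edges of `G` lie within `S`. -/
def EdgesIn (G : SimpleGraph (Fin n)) (S : Set (Fin n)) : Prop :=
  ∀ ⦃u v⦄, G.Adj u v → u ∈ S ∧ v ∈ S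

/-- `S` is a union of components wrt adjacency. -/
def Sep (G : SimpleGraph (Fin n)) (S : Set (Fin n)) : Prop :=
  ∀ ⦃u v⦄, G.Adj u v → (u ∈ S ↔ v ∈ S)

lemma mem_csupp_self (G : SimpleGraph (Fin n)) (u : Fin n) : u ∈ csupp G u := Reachable.refl u

lemma csupp_eq_of_reachable {G : SimpleGraph (Fin n)} {u v : Fin n} (h : G.Reachable u v) :
    csupp G u = csupp G v := by
  ext w; exact ⟨fun hw => h.symm.trans hw, fun hw => h.trans hw⟩

lemma reachable_of_csupp_eq {G : SimpleGraph (Fin n)} {u v : Fin n}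
    (h : csupp G u = csupp G v) : G.Reachable u v := by
  have : v ∈ csupp G u := by rw [h]; exact mem_csupp_self G v
  exact this

lemma csupp_eq_of_mem {G : SimpleGraph (Fin n)} {u v : Fin n} (h : v ∈ csupp G u) :
    csupp G v = csupp G u := (csupp_eq_of_reachable h).symm

lemma sep_csupp (G : SimpleGraph (Fin n)) (x : Fin n) : Sep G (csupp G x) := by
  intro u v huv
  exact ⟨fun hu => hu.trans huv.reachable, fun hv => hv.trans huv.symm.reachable⟩

lemma Sep.union {G : SimpleGraph (Fin n)} {S S' : Set (Fin n)} (h : Sep G S) (h' : Sep G S') :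
    Sep G (S ∪ S') := by
  intro u v huv
  rw [Set.mem_union, Set.mem_union, h huv, h' huv]

lemma csupp_disjoint {G : SimpleGraph (Fin n)} {u v : Fin n} (h : csupp G u ≠ csupp G v) :
    Disjoint (csupp G u) (csupp G v) := by
  rw [Set.disjoint_left]
  intro w hwu hwv
  exact h ((csupp_eq_of_mem hwu).symm.trans (csupp_eq_of_mem hwv))

lemma EdgesIn.sep {G : SimpleGraph (Fin n)} {S : Set (Fin n)} (h : EdgesIn G S) : Sep G S :=
  fun u v huv => by simp [(h huv).1, (h huv).2]

lemma Sep.compl {G : SimpleGraph (Fin n)} {S : Set (Fin n)} (h : Sep G S) : Sep G Sᶜ :=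
  fun u v huv => by simp [h huv]

lemma Sep.stay {G : SimpleGraph (Fin n)} {S : Set (Fin n)} (h : Sep G S) {u v : Fin n}
    (hu : u ∈ S) (hr : G.Reachable u v) : v ∈ S := by
  obtain ⟨w⟩ := hr
  induction w with
  | nil => exact hu
  | cons hadj p ih => exact ih ((h hadj).1 hu)

lemma Sep.csupp_subset {G : SimpleGraph (Fin n)} {S : Set (Fin n)} (h : Sep G S) {u : Fin n}
    (hu : u ∈ S) : csupp G u ⊆ S := fun _ hv => h.stay hu hv

lemma reach_sup_left {H F : SimpleGraph (Fin n)} {S : Set (Fin n)}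
    (hH : EdgesIn H S) (hF : EdgesIn F Sᶜ) {u v : Fin n} (hu : u ∈ S)
    (hr : (H ⊔ F).Reachable u v) : H.Reachable u v := by
  obtain ⟨w⟩ := hr
  induction w with
  | nil => exact Reachable.refl _
  | @cons a b c hadj p ih =>
    rcases (sup_adj _ _ _ _).mp hadj with h1 | h2
    · exact (h1.reachable).trans (ih ((hH h1).2))
    · exact absurd hu (hF h2).1

lemma sep_sup {H F : SimpleGraph (Fin n)} {S : Set (Fin n)}
    (hH : EdgesIn H S) (hF : EdgesIn F Sᶜ) : Sep (H ⊔ F) S := by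
  intro u v huv
  rcases (sup_adj _ _ _ _).mp huv with h1 | h2
  · simp [(hH h1).1, (hH h1).2]
  · have := hF h2; simp_all [Set.mem_compl_iff]

lemma csupp_sup_left {H F : SimpleGraph (Fin n)} {S : Set (Fin n)}
    (hH : EdgesIn H S) (hF : EdgesIn F Sᶜ) {u : Fin n} (hu : u ∈ S) :
    csupp (H ⊔ F) u = csupp H u := by
  ext v
  exact ⟨fun hv => reach_sup_left hH hF hu hv, fun hv => hv.mono le_sup_left⟩

lemma csupp_sup_right {H F : SimpleGraph (Fin n)} {S : Set (Fin n)}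
    (hH : EdgesIn H S) (hF : EdgesIn F Sᶜ) {u : Fin n} (hu : u ∈ Sᶜ) :
    csupp (H ⊔ F) u = csupp F u := by
  have hH' : EdgesIn H (Sᶜ)ᶜ := by rwa [compl_compl]
  rw [sup_comm]
  exact csupp_sup_left hF hH' hu

lemma compsIn_sup_left {H F : SimpleGraph (Fin n)} {S : Set (Fin n)}
    (hH : EdgesIn H S) (hF : EdgesIn F Sᶜ) :
    compsIn (H ⊔ F) S = compsIn H S := by
  ext A
  constructor
  · rintro ⟨u, hu, rfl⟩; exact ⟨u, hu, csupp_sup_left hH hF hu⟩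
  · rintro ⟨u, hu, rfl⟩; exact ⟨u, hu, (csupp_sup_left hH hF hu).symm⟩

lemma compsIn_sup_right {H F : SimpleGraph (Fin n)} {S : Set (Fin n)}
    (hH : EdgesIn H S) (hF : EdgesIn F Sᶜ) :
    compsIn (H ⊔ F) Sᶜ = compsIn F Sᶜ := by
  ext A
  constructor
  · rintro ⟨u, hu, rfl⟩; exact ⟨u, hu, csupp_sup_right hH hF hu⟩
  · rintro ⟨u, hu, rfl⟩; exact ⟨u, hu, (csupp_sup_right hH hF hu).symm⟩

lemma ncard_compsIn_univ (G : SimpleGraph (Fin n)) :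
    (compsIn G Set.univ).ncard = numComponents G := by
  classical
  have hwd : ∀ (v w : Fin n) (p : G.Walk v w), p.IsPath → csupp G v = csupp G w :=
    fun v w p _ => csupp_eq_of_reachable ⟨p⟩
  set f : G.ConnectedComponent → Set (Fin n) := ConnectedComponent.lift (csupp G) hwd with hf
  have hinj : Function.Injective f := by
    intro c d
    refine ConnectedComponent.ind₂ (fun v w h => ?_) c d
    exact ConnectedComponent.sound (reachable_of_csupp_eq h)
  have hrange : Set.range f = compsIn G Set.univ := by
    ext A
    constructor
    · rintro ⟨c, rfl⟩
      refine c.ind (fun v => ?_)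
      exact ⟨v, trivial, rfl⟩
    · rintro ⟨u, -, rfl⟩
      exact ⟨G.connectedComponentMk u, rfl⟩
  rw [← hrange, ← Nat.card_coe_set_eq, Nat.card_range_of_injective hinj]
  rfl

lemma compsIn_univ_eq_union {G : SimpleGraph (Fin n)} {S : Set (Fin n)} :
    compsIn G Set.univ = compsIn G S ∪ compsIn G Sᶜ := by
  ext A
  constructor
  · rintro ⟨u, -, rfl⟩
    by_cases hu : u ∈ S
    · exact Or.inl ⟨u, hu, rfl⟩
    · exact Or.inr ⟨u, hu, rfl⟩
  · rintro (⟨u, -, rfl⟩ | ⟨u, -, rfl⟩) <;> exact ⟨u, trivial, rfl⟩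

lemma disjoint_compsIn {G : SimpleGraph (Fin n)} {S : Set (Fin n)} (hsep : Sep G S) :
    Disjoint (compsIn G S) (compsIn G Sᶜ) := by
  rw [Set.disjoint_left]
  rintro A ⟨u, hu, rfl⟩ ⟨u', hu', hA⟩
  have : u' ∈ csupp G u := hA ▸ mem_csupp_self G u'
  exact hu' (hsep.stay hu this)

lemma numComponents_split {G : SimpleGraph (Fin n)} {S : Set (Fin n)} (hsep : Sep G S) :
    numComponents G = (compsIn G S).ncard + (compsIn G Sᶜ).ncard := by
  rw [← ncard_compsIn_univ, compsIn_univ_eq_union (S := S)]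
  exact Set.ncard_union_eq (disjoint_compsIn hsep) (Set.toFinite _) (Set.toFinite _)

section Map
variable {m : ℕ} (ι : Fin m ↪ Fin n) {W : Set (Fin n)}

lemma edgesIn_map (hr : Set.range ι = W) (K : SimpleGraph (Fin m)) : EdgesIn (K.map ι) W := by
  rintro u v ⟨-, a, b, hab, rfl, rfl⟩
  exact ⟨hr ▸ Set.mem_range_self a, hr ▸ Set.mem_range_self b⟩

lemma map_reach_of {K : SimpleGraph (Fin m)} {a : Fin m} {x : Fin n}
    (h : (K.map ι).Reachable (ι a) x) : ∃ b, x = ι b ∧ K.Reachable a b := by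
  obtain ⟨w⟩ := h
  generalize hstart : (ι a) = y at w
  induction w generalizing a with
  | nil => exact ⟨a, hstart.symm, Reachable.refl a⟩
  | @cons p q r hadj w ih =>
    obtain ⟨-, a', b', hab, ha', hb'⟩ := hadj
    subst hstart
    have ha : a' = a := ι.injective ha'
    subst ha
    obtain ⟨c, hc, hrc⟩ := ih hb'
    exact ⟨c, hc, hab.reachable.trans hrc⟩

lemma map_reach_iff {K : SimpleGraph (Fin m)} {a b : Fin m} :
    (K.map ι).Reachable (ι a) (ι b) ↔ K.Reachable a b := by
  constructor
  · intro h
    obtain ⟨b', hb', hr'⟩ := map_reach_of ι h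
    rw [ι.injective hb']; exact hr'
  · intro h
    exact h.map (SimpleGraph.Embedding.map ι K).toHom

lemma csupp_map {K : SimpleGraph (Fin m)} {a : Fin m} :
    csupp (K.map ι) (ι a) = ι '' csupp K a := by
  ext x
  constructor
  · intro hx
    obtain ⟨b, rfl, hrb⟩ := map_reach_of ι hx
    exact ⟨b, hrb, rfl⟩
  · rintro ⟨b, hb, rfl⟩
    exact (map_reach_iff ι).mpr hb

lemma compsIn_map (hr : Set.range ι = W) (K : SimpleGraph (Fin m)) :
    compsIn (K.map ι) W = (Set.image ι) '' compsIn K Set.univ := by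
  ext A
  constructor
  · rintro ⟨u, hu, rfl⟩
    obtain ⟨a, rfl⟩ : ∃ a, ι a = u := by rwa [← Set.mem_range, hr]
    exact ⟨csupp K a, ⟨a, trivial, rfl⟩, (csupp_map ι).symm⟩
  · rintro ⟨B, ⟨a, -, rfl⟩, rfl⟩
    exact ⟨ι a, hr ▸ Set.mem_range_self a, (csupp_map ι).symm⟩

lemma ncard_compsIn_map (hr : Set.range ι = W) (K : SimpleGraph (Fin m)) :
    (compsIn (K.map ι) W).ncard = numComponents K := by
  rw [compsIn_map ι hr, Set.ncard_image_of_injective _ (Set.image_injective.mpr ι.injective),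
    ncard_compsIn_univ]

lemma map_sup_edge (K : SimpleGraph (Fin m)) (a b : Fin m) :
    (K ⊔ SimpleGraph.fromEdgeSet {s(a, b)}).map ι
      = K.map ι ⊔ SimpleGraph.fromEdgeSet {s(ι a, ι b)} := by
  ext x y
  simp only [SimpleGraph.map_adj, SimpleGraph.sup_adj, SimpleGraph.fromEdgeSet_adj,
    Set.mem_singleton_iff, Sym2.eq, Sym2.rel_iff', Prod.mk.injEq, Prod.swap_prod_mk]
  constructor
  · rintro ⟨p, q, (hpq | ⟨(⟨rfl, rfl⟩ | ⟨rfl, rfl⟩), hne⟩), rfl, rfl⟩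
    · exact Or.inl ⟨p, q, hpq, rfl, rfl⟩
    · exact Or.inr ⟨Or.inl ⟨rfl, rfl⟩, fun h => hne (ι.injective h)⟩
    · exact Or.inr ⟨Or.inr ⟨rfl, rfl⟩, fun h => hne (ι.injective h)⟩
  · rintro (⟨p, q, hpq, rfl, rfl⟩ | ⟨(⟨rfl, rfl⟩ | ⟨rfl, rfl⟩), hne⟩)
    · exact ⟨p, q, Or.inl hpq, rfl, rfl⟩
    · exact ⟨a, b, Or.inr ⟨Or.inl ⟨rfl, rfl⟩, fun h => hne (congrArg ι h)⟩, rfl, rfl⟩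
    · exact ⟨b, a, Or.inr ⟨Or.inr ⟨rfl, rfl⟩, fun h => hne (congrArg ι h)⟩, rfl, rfl⟩

lemma map_comap (hr : Set.range ι = W) {H : SimpleGraph (Fin n)} (hH : EdgesIn H W) :
    (H.comap ι).map ι = H := by
  ext x y
  simp only [SimpleGraph.map_adj, SimpleGraph.comap_adj]
  constructor
  · rintro ⟨a, b, hab, rfl, rfl⟩; exact hab
  · intro hxy
    obtain ⟨hx, hy⟩ := hH hxy
    obtain ⟨a, rfl⟩ : ∃ a, ι a = x := by rwa [← Set.mem_range, hr]
    obtain ⟨b, rfl⟩ : ∃ b, ι b = y := by rwa [← Set.mem_range, hr]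
    exact ⟨a, b, hxy, rfl, rfl⟩

end Map

open Classical in
/-- A component of maximal size. -/
noncomputable def topcomp (G : SimpleGraph (Fin n)) : Set (Fin n) :=
  if h : (compsIn G Set.univ).Nonempty then
    (Set.exists_max_image _ Set.ncard (Set.toFinite _) h).choose
  else ∅

lemma topcomp_mem {G : SimpleGraph (Fin n)} (h : (compsIn G Set.univ).Nonempty) :
    topcomp G ∈ compsIn G Set.univ := by
  rw [topcomp, dif_pos h]
  exact (Set.exists_max_image _ Set.ncard (Set.toFinite _) h).choose_spec.1

lemma topcomp_max {G : SimpleGraph (Fin n)} (h : (compsIn G Set.univ).Nonempty)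
    {A : Set (Fin n)} (hA : A ∈ compsIn G Set.univ) : A.ncard ≤ (topcomp G).ncard := by
  rw [topcomp, dif_pos h]
  exact (Set.exists_max_image _ Set.ncard (Set.toFinite _) h).choose_spec.2 A hA

/-- Restriction of a graph to a vertex subset, as an ambient graph. -/
def restrict (G : SimpleGraph (Fin n)) (S : Set (Fin n)) : SimpleGraph (Fin n) where
  Adj u v := G.Adj u v ∧ u ∈ S ∧ v ∈ S
  symm := ⟨fun u v h => ⟨h.1.symm, h.2.2, h.2.1⟩⟩
  loopless := ⟨fun u h => G.loopless.irrefl u h.1⟩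

lemma restrict_edgesIn (G : SimpleGraph (Fin n)) (S : Set (Fin n)) :
    EdgesIn (restrict G S) S := fun _ _ h => h.2

lemma restrict_sup_compl {G : SimpleGraph (Fin n)} {S : Set (Fin n)} (hsep : Sep G S) :
    restrict G S ⊔ restrict G Sᶜ = G := by
  ext u v
  constructor
  · rintro (h | h) <;> exact h.1
  · intro h
    by_cases hu : u ∈ S
    · exact Or.inl ⟨h, hu, (hsep h).mp hu⟩
    · exact Or.inr ⟨h, hu, fun hv => hu ((hsep h).mpr hv)⟩

lemma card_le_ncomps_mul_top (G : SimpleGraph (Fin n)) (hne : (compsIn G Set.univ).Nonempty) :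
    n ≤ (compsIn G Set.univ).ncard * (topcomp G).ncard := by
  classical
  set s : Finset (Set (Fin n)) := (Set.toFinite (compsIn G Set.univ)).toFinset with hs
  have hsub : (Finset.univ : Finset (Fin n)) ⊆ s.biUnion (fun A => (Set.toFinite A).toFinset) := by
    intro u _
    refine Finset.mem_biUnion.mpr ⟨csupp G u, ?_, ?_⟩
    · exact (Set.Finite.mem_toFinset _).mpr ⟨u, trivial, rfl⟩
    · exact (Set.Finite.mem_toFinset _).mpr (mem_csupp_self G u)
  calc n = (Finset.univ : Finset (Fin n)).card := by simp
    _ ≤ (s.biUnion (fun A => (Set.toFinite A).toFinset)).card := Finset.card_le_card hsub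
    _ ≤ ∑ A ∈ s, ((Set.toFinite A).toFinset).card := Finset.card_biUnion_le
    _ ≤ s.card * (topcomp G).ncard := by
        refine Finset.sum_le_card_nsmul _ _ _ (fun A hA => ?_)
        rw [← Set.ncard_eq_toFinset_card A (Set.toFinite A)]
        exact topcomp_max hne ((Set.Finite.mem_toFinset _).mp hA)
    _ = (compsIn G Set.univ).ncard * (topcomp G).ncard := by
        rw [hs, ← Set.ncard_eq_toFinset_card _ (Set.toFinite _)]

lemma fiber_ncard {α β : Type*} {S : Set (α × β)} (hS : S.Finite) (a : α) [DecidableEq α] :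
    ({b | (a, b) ∈ S}).ncard = (hS.toFinset.filter (fun p => p.1 = a)).card := by
  have himg : (fun b => (a, b)) '' {b | (a, b) ∈ S}
      = ↑(hS.toFinset.filter (fun p => p.1 = a)) := by
    ext ⟨x, y⟩
    simp only [Set.mem_image, Set.mem_setOf_eq, Finset.coe_filter, Set.Finite.mem_toFinset,
      Set.mem_setOf_eq, Prod.mk.injEq]
    constructor
    · rintro ⟨b, hb, rfl, rfl⟩; exact ⟨hb, rfl⟩
    · rintro ⟨hxy, rfl⟩; exact ⟨y, hxy, rfl, rfl⟩
  have hinj : Function.Injective (fun b : β => (a, b)) := by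
    intro b1 b2 h; exact (Prod.ext_iff.mp h).2
  rw [← Set.ncard_image_of_injective _ hinj, himg, Set.ncard_coe_finset]

lemma helper1 {α β : Type*} (S : Set (α × β)) (A : Set α) (hS : S.Finite) (hA : A.Finite)
    (k : ℕ) (h : ∀ a ∈ A, k ≤ ({b | (a, b) ∈ S}).ncard) : k * A.ncard ≤ S.ncard := by
  classical
  set t : Finset α := hA.toFinset ∪ hS.toFinset.image Prod.fst with ht
  have hmem : ∀ p ∈ hS.toFinset, p.1 ∈ t := by
    intro p hp
    exact Finset.mem_union_right _ (Finset.mem_image_of_mem _ hp)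
  have hsum : S.ncard = ∑ a ∈ t, (hS.toFinset.filter (fun p => p.1 = a)).card := by
    rw [Set.ncard_eq_toFinset_card _ hS]
    exact Finset.card_eq_sum_card_fiberwise hmem
  have hge : ∑ a ∈ t, (hS.toFinset.filter (fun p => p.1 = a)).card
      ≥ ∑ a ∈ hA.toFinset, (hS.toFinset.filter (fun p => p.1 = a)).card :=
    Finset.sum_le_sum_of_subset Finset.subset_union_left
  have hper : ∀ a ∈ hA.toFinset, k ≤ (hS.toFinset.filter (fun p => p.1 = a)).card := by
    intro a ha
    rw [← fiber_ncard hS a]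
    exact h a (hA.mem_toFinset.mp ha)
  calc k * A.ncard = ∑ _a ∈ hA.toFinset, k := by
        rw [Finset.sum_const, smul_eq_mul, Set.ncard_eq_toFinset_card _ hA, mul_comm]
    _ ≤ ∑ a ∈ hA.toFinset, (hS.toFinset.filter (fun p => p.1 = a)).card :=
        Finset.sum_le_sum hper
    _ ≤ S.ncard := by rw [hsum]; exact hge

lemma helper2 {α β : Type*} (S T : Set (α × β)) (hS : S.Finite) (hT : T.Finite) (c : ℝ)
    (h : ∀ a : α, (({b | (a, b) ∈ S}).ncard : ℝ) ≤ c * ({b | (a, b) ∈ T}).ncard) :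
    (S.ncard : ℝ) ≤ c * T.ncard := by
  classical
  set t : Finset α := hS.toFinset.image Prod.fst ∪ hT.toFinset.image Prod.fst with ht
  have hsumS : S.ncard = ∑ a ∈ t, (hS.toFinset.filter (fun p => p.1 = a)).card := by
    rw [Set.ncard_eq_toFinset_card _ hS]
    exact Finset.card_eq_sum_card_fiberwise (fun p hp =>
      Finset.mem_union_left _ (Finset.mem_image_of_mem _ hp))
  have hsumT : T.ncard = ∑ a ∈ t, (hT.toFinset.filter (fun p => p.1 = a)).card := by
    rw [Set.ncard_eq_toFinset_card _ hT]
    exact Finset.card_eq_sum_card_fiberwise (fun p hp =>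
      Finset.mem_union_right _ (Finset.mem_image_of_mem _ hp))
  rw [hsumS, hsumT]
  push_cast
  rw [Finset.mul_sum]
  refine Finset.sum_le_sum (fun a _ => ?_)
  have := h a
  rwa [fiber_ncard hS a, fiber_ncard hT a] at this

lemma recover {W : Set (Fin n)} {F H G : SimpleGraph (Fin n)}
    (hF : EdgesIn F Wᶜ) (hH : EdgesIn H W)
    (h1 : (compsIn H W).ncard = 1)
    (hlt : ∀ u ∉ W, (csupp F u).ncard < W.ncard)
    (hG : G = H ⊔ F) :
    topcomp G = W ∧ restrict G W = H ∧ restrict G Wᶜ = F := by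
  obtain ⟨A, hA⟩ := Set.ncard_eq_one.mp h1
  obtain ⟨u₀, hu₀, hAu₀⟩ : A ∈ compsIn H W := by rw [hA]; rfl
  have hAW : A = W := by
    apply Set.Subset.antisymm
    · rw [hAu₀]; exact hH.sep.csupp_subset hu₀
    · intro u hu
      have : csupp H u ∈ compsIn H W := ⟨u, hu, rfl⟩
      rw [hA, Set.mem_singleton_iff] at this
      rw [← this]; exact mem_csupp_self H u
  have hcompsW : compsIn G W = {W} := by
    rw [hG, compsIn_sup_left hH hF, hA, hAW]
  have hcompsU : compsIn G Set.univ = {W} ∪ compsIn F Wᶜ := by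
    rw [compsIn_univ_eq_union (S := W), hcompsW, hG, compsIn_sup_right hH hF]
  have hWmem : W ∈ compsIn G Set.univ := by rw [hcompsU]; exact Or.inl rfl
  have hne : (compsIn G Set.univ).Nonempty := ⟨W, hWmem⟩
  have htop : topcomp G = W := by
    have hT := topcomp_mem hne
    rw [hcompsU] at hT
    rcases hT with hT | hT
    · exact hT
    · obtain ⟨u, hu, hTu⟩ := hT
      have h1' := topcomp_max hne hWmem
      have h2' := hlt u hu
      rw [← hTu] at h2'
      omega
  refine ⟨htop, ?_, ?_⟩
  · ext u v
    constructor
    · rintro ⟨hadj, hu, hv⟩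
      rw [hG] at hadj
      rcases (sup_adj _ _ _ _).mp hadj with h | h
      · exact h
      · exact absurd hu (hF h).1
    · intro h
      exact ⟨by rw [hG]; exact Or.inl h, (hH h).1, (hH h).2⟩
  · ext u v
    constructor
    · rintro ⟨hadj, hu, hv⟩
      rw [hG] at hadj
      rcases (sup_adj _ _ _ _).mp hadj with h | h
      · exact absurd ((hH h).1) hu
      · exact h
    · intro h
      exact ⟨by rw [hG]; exact Or.inr h, (hF h).1, (hF h).2⟩

lemma Bfacts {G : SimpleGraph (Fin n)} {C : Set (Fin n)}
    (hCc : C ∈ compsIn G Set.univ) (hCtop : C ≠ topcomp G) :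
    Sep G (topcomp G ∪ C) ∧ Disjoint (topcomp G) C ∧
      compsIn G (topcomp G ∪ C) = {topcomp G, C} := by
  have hne : (compsIn G Set.univ).Nonempty := ⟨C, hCc⟩
  obtain ⟨c, -, hCc'⟩ := hCc
  obtain ⟨t, -, hTt⟩ := topcomp_mem hne
  have hsep : Sep G (topcomp G ∪ C) := by
    refine Sep.union ?_ ?_
    · rw [hTt]; exact sep_csupp G t
    · rw [hCc']; exact sep_csupp G c
  have hdisj : Disjoint (topcomp G) C := by
    rw [hTt, hCc']
    refine csupp_disjoint ?_
    rw [← hTt, ← hCc']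
    exact fun h => hCtop h.symm
  refine ⟨hsep, hdisj, ?_⟩
  ext A
  constructor
  · rintro ⟨u, hu, rfl⟩
    rcases hu with hu | hu
    · left
      rw [hTt] at hu ⊢
      exact csupp_eq_of_mem hu
    · right
      rw [hCc'] at hu ⊢
      exact csupp_eq_of_mem hu
  · rintro (rfl | rfl)
    · exact ⟨t, Or.inl (by rw [hTt]; exact mem_csupp_self G t), hTt⟩
    · exact ⟨c, Or.inr (by rw [hCc']; exact mem_csupp_self G c), hCc'⟩

lemma diff_top {T C : Set (Fin n)} (hdisj : Disjoint T C) : (T ∪ C) \ T = C := by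
  ext x
  simp only [Set.mem_diff, Set.mem_union]
  exact ⟨fun h => h.1.resolve_left h.2, fun h => ⟨Or.inr h, fun hT => Set.disjoint_left.mp hdisj hT h⟩⟩

end BAaux

open BAaux in
/-- Transfer principle: if `|𝒢^(2)| ≤ (1/2+ε')|𝒢^(1)|` holds asymptotically for every
bridge-addable class, then `i·|𝒢^(i+1)| ≤ (1/2+ε')|𝒢^(i)|` holds asymptotically for
every `1 ≤ i ≤ i₀` and every bridge-addable class. -/
theorem stmt9
    (H : ∀ ε' : ℝ, 0 < ε' → ∃ n₀ : ℕ, ∀ n : ℕ, n₀ ≤ n →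
      ∀ 𝒢 : Set (SimpleGraph (Fin n)), BridgeAddable 𝒢 →
        (compCount 𝒢 2 : ℝ) ≤ (1/2 + ε') * compCount 𝒢 1) :
    ∀ ε' : ℝ, 0 < ε' → ∀ i₀ : ℕ, 1 ≤ i₀ → ∃ n₀ : ℕ,
      ∀ i : ℕ, 1 ≤ i → i ≤ i₀ → ∀ n : ℕ, n₀ ≤ n →
        ∀ 𝒢 : Set (SimpleGraph (Fin n)), BridgeAddable 𝒢 →
          (i : ℝ) * compCount 𝒢 (i + 1) ≤ (1/2 + ε') * compCount 𝒢 i := by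
  intro ε' hε i₀ hi₀
  obtain ⟨n₀ε, hHε⟩ := H ε' hε
  refine ⟨(i₀ + 1) * max n₀ε 1, ?_⟩
  intro i hi1 hii₀ n hn 𝒢 hBA
  classical
  have hc : (0:ℝ) ≤ 1/2 + ε' := by linarith
  -- the auxiliary sets
  set cond : Set (Fin n) × SimpleGraph (Fin n) → Prop := fun p =>
    EdgesIn p.2 p.1ᶜ ∧ (compsIn p.2 p.1ᶜ).ncard = i - 1 ∧
    (∀ u ∉ p.1, (csupp p.2 u).ncard < p.1.ncard) ∧ max n₀ε 1 ≤ p.1.ncard with hcond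
  set A₁ : Set ((Set (Fin n) × SimpleGraph (Fin n)) × SimpleGraph (Fin n)) :=
    {x | cond x.1 ∧ EdgesIn x.2 x.1.1 ∧ x.2 ⊔ x.1.2 ∈ 𝒢 ∧ (compsIn x.2 x.1.1).ncard = 1}
    with hA₁
  set A₂ : Set ((Set (Fin n) × SimpleGraph (Fin n)) × SimpleGraph (Fin n)) :=
    {x | cond x.1 ∧ EdgesIn x.2 x.1.1 ∧ x.2 ⊔ x.1.2 ∈ 𝒢 ∧ (compsIn x.2 x.1.1).ncard = 2}
    with hA₂
  set B : Set (SimpleGraph (Fin n) × Set (Fin n)) :=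
    {y | y.1 ∈ 𝒢 ∧ numComponents y.1 = i + 1 ∧ y.2 ∈ compsIn y.1 Set.univ ∧
      y.2 ≠ topcomp y.1} with hB
  have step1 : i * compCount 𝒢 (i + 1) ≤ B.ncard := by
    have harg : ∀ G ∈ {G | G ∈ 𝒢 ∧ numComponents G = i + 1},
        i ≤ ({C | (G, C) ∈ B}).ncard := by
      intro G hG
      have hcomps : (compsIn G Set.univ).ncard = i + 1 := by
        rw [ncard_compsIn_univ]; exact hG.2
      have hne : (compsIn G Set.univ).Nonempty := by
        apply Set.nonempty_of_ncard_ne_zero; omega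
      have hfib : {C | (G, C) ∈ B} = compsIn G Set.univ \ {topcomp G} := by
        ext C
        simp only [hB, Set.mem_setOf_eq, Set.mem_diff, Set.mem_singleton_iff]
        exact ⟨fun h => ⟨h.2.2.1, h.2.2.2⟩, fun h => ⟨hG.1, hG.2, h.1, h.2⟩⟩
      rw [hfib, Set.ncard_diff_singleton_of_mem (topcomp_mem hne), hcomps]
      omega
    have key := helper1 B {G | G ∈ 𝒢 ∧ numComponents G = i + 1} (Set.toFinite _)
      (Set.toFinite _) i harg
    simpa [compCount] using key
  have step2 : B.ncard ≤ A₂.ncard := by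
    have key := Set.ncard_le_ncard_of_injOn
      (fun y => ((topcomp y.1 ∪ y.2, restrict y.1 (topcomp y.1 ∪ y.2)ᶜ),
        restrict y.1 (topcomp y.1 ∪ y.2))) (s := B) (t := A₂) ?_ ?_ (Set.toFinite _)
    · exact key
    · rintro ⟨G, C⟩ ⟨hmem, hnc, hCc, hCtop⟩
      dsimp only at hmem hnc hCc hCtop ⊢
      obtain ⟨hsepW, hdisj, hcompsW⟩ := Bfacts hCc hCtop
      have hne : (compsIn G Set.univ).Nonempty := ⟨C, hCc⟩
      obtain ⟨c, -, hCc'⟩ := hCc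
      set T := topcomp G with hTdef
      set W := T ∪ C with hWdef
      have hsplit : restrict G W ⊔ restrict G Wᶜ = G := restrict_sup_compl hsepW
      have hEW : EdgesIn (restrict G W) W := restrict_edgesIn G W
      have hEWc : EdgesIn (restrict G Wᶜ) Wᶜ := restrict_edgesIn G Wᶜ
      have hTC : T ≠ C := fun h => hCtop h.symm
      have h2 : (compsIn G W).ncard = 2 := by
        rw [hcompsW]; exact Set.ncard_pair hTC
      have hcompsl : compsIn (restrict G W) W = compsIn G W := by
        have := compsIn_sup_left hEW hEWc
        rw [hsplit] at this
        exact this.symm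
      have hcompsr : compsIn (restrict G Wᶜ) Wᶜ = compsIn G Wᶜ := by
        have := compsIn_sup_right hEW hEWc
        rw [hsplit] at this
        exact this.symm
      have hsplitnum : numComponents G = (compsIn G W).ncard + (compsIn G Wᶜ).ncard :=
        numComponents_split hsepW
      have hcW : C.ncard ≠ 0 := by
        refine Set.ncard_ne_zero_of_mem (a := c) ?_ (Set.toFinite _)
        rw [hCc']; exact mem_csupp_self G c
      have hWcard : W.ncard = T.ncard + C.ncard := Set.ncard_union_eq hdisj
        (Set.toFinite _) (Set.toFinite _)
      have hTtop : ∀ u : Fin n, (csupp G u).ncard ≤ T.ncard :=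
        fun u => topcomp_max hne ⟨u, trivial, rfl⟩
      have hc3 : ∀ u ∉ W, (csupp (restrict G Wᶜ) u).ncard < W.ncard := by
        intro u hu
        have hcs : csupp (restrict G Wᶜ) u = csupp G u := by
          have := csupp_sup_right hEW hEWc (u := u) hu
          rw [hsplit] at this
          exact this.symm
        rw [hcs]
        have := hTtop u
        omega
      have hc4 : max n₀ε 1 ≤ W.ncard := by
        have hcard : n ≤ (i + 1) * T.ncard := by
          have h5 := card_le_ncomps_mul_top G hne
          rwa [ncard_compsIn_univ, hnc] at h5
        have h6 : (i + 1) * max n₀ε 1 ≤ (i₀ + 1) * max n₀ε 1 :=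
          Nat.mul_le_mul_right _ (by omega)
        have h7 : (i + 1) * max n₀ε 1 ≤ (i + 1) * T.ncard := by omega
        have h8 : max n₀ε 1 ≤ T.ncard := Nat.le_of_mul_le_mul_left h7 (by omega)
        omega
      refine ⟨?_, hEW, ?_, by rw [hcompsl, h2]⟩
      · rw [hcond]
        dsimp only
        refine ⟨hEWc, ?_, hc3, hc4⟩
        rw [hcompsr]
        omega
      · rw [hsplit]; exact hmem
    · rintro ⟨G, C⟩ ⟨hmem, hnc, hCc, hCtop⟩ ⟨G', C'⟩ ⟨hmem', hnc', hCc', hCtop'⟩ heq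
      dsimp only at hmem hnc hCc hCtop hmem' hnc' hCc' hCtop' heq
      obtain ⟨hsepW, hdisj, -⟩ := Bfacts hCc hCtop
      obtain ⟨hsepW', hdisj', -⟩ := Bfacts hCc' hCtop'
      have e1 : topcomp G ∪ C = topcomp G' ∪ C' := congrArg (fun z => z.1.1) heq
      have e2 : restrict G (topcomp G ∪ C)ᶜ = restrict G' (topcomp G' ∪ C')ᶜ :=
        congrArg (fun z => z.1.2) heq
      have e3 : restrict G (topcomp G ∪ C) = restrict G' (topcomp G' ∪ C') :=
        congrArg (fun z => z.2) heq
      have hGG : G = G' := by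
        rw [← restrict_sup_compl hsepW, ← restrict_sup_compl hsepW', e2, e3]
      subst hGG
      have hCC : C = C' := by
        rw [← diff_top hdisj, ← diff_top hdisj', e1]
      rw [hCC]
  have step3 : (A₂.ncard : ℝ) ≤ (1/2 + ε') * A₁.ncard := by
    refine helper2 A₂ A₁ (Set.toFinite _) (Set.toFinite _) _ ?_
    intro p
    by_cases hp : cond p
    · obtain ⟨W, F⟩ := p
      have hpc := hp
      rw [hcond] at hp
      dsimp only at hp
      obtain ⟨hFE, hc2, hc3, hc4⟩ := hp
      have hWcard : Fintype.card ↥W = W.ncard := by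
        rw [← Nat.card_coe_set_eq, Nat.card_eq_fintype_card]
      set m := W.ncard with hm
      set e : ↥W ≃ Fin m := Fintype.equivFinOfCardEq hWcard with he
      set ι : Fin m ↪ Fin n :=
        (e.symm.toEmbedding.trans (Function.Embedding.subtype _)) with hι
      have hrange : Set.range ι = W := by
        ext x
        constructor
        · rintro ⟨a, rfl⟩
          exact (e.symm a).2
        · intro hx
          exact ⟨e ⟨x, hx⟩, by simp [hι]⟩
      set 𝒟 : Set (SimpleGraph (Fin m)) := {K | K.map ι ⊔ F ∈ 𝒢} with h𝒟
      have hBA𝒟 : BridgeAddable 𝒟 := by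
        intro K hK a b hnr
        have hmemG : K.map ι ⊔ F ∈ 𝒢 := hK
        have hnr' : ¬ (K.map ι ⊔ F).Reachable (ι a) (ι b) := by
          intro hr
          have h1 := reach_sup_left (edgesIn_map ι hrange K) hFE
            (hrange ▸ Set.mem_range_self a) hr
          exact hnr ((map_reach_iff ι).mp h1)
        have hin := hBA _ hmemG (ι a) (ι b) hnr'
        show (K ⊔ SimpleGraph.fromEdgeSet {s(a, b)}).map ι ⊔ F ∈ 𝒢
        rw [map_sup_edge, sup_right_comm]
        exact hin
      have hfib : ∀ k : ℕ,
          {Hg : SimpleGraph (Fin n) | EdgesIn Hg W ∧ Hg ⊔ F ∈ 𝒢 ∧ (compsIn Hg W).ncard = k}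
            = (fun K => K.map ι) '' {K | K ∈ 𝒟 ∧ numComponents K = k} := by
        intro k
        ext Hg
        simp only [Set.mem_setOf_eq, Set.mem_image]
        constructor
        · rintro ⟨hE, hmemg, hk⟩
          refine ⟨Hg.comap ι, ⟨?_, ?_⟩, map_comap ι hrange hE⟩
          · show (Hg.comap ι).map ι ⊔ F ∈ 𝒢
            rw [map_comap ι hrange hE]
            exact hmemg
          · have hthis := ncard_compsIn_map ι hrange (Hg.comap ι)
            rw [map_comap ι hrange hE] at hthis
            exact hthis.symm.trans hk
        · rintro ⟨K, ⟨hK𝒟, hKk⟩, rfl⟩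
          exact ⟨edgesIn_map ι hrange K, hK𝒟,
            by rw [ncard_compsIn_map ι hrange K]; exact hKk⟩
      have hfA : ∀ k : ℕ, ∀ (A : Set ((Set (Fin n) × SimpleGraph (Fin n)) × SimpleGraph (Fin n))),
          A = {x | cond x.1 ∧ EdgesIn x.2 x.1.1 ∧ x.2 ⊔ x.1.2 ∈ 𝒢 ∧ (compsIn x.2 x.1.1).ncard = k} →
          {b | ((W, F), b) ∈ A}
            = {Hg : SimpleGraph (Fin n) | EdgesIn Hg W ∧ Hg ⊔ F ∈ 𝒢 ∧ (compsIn Hg W).ncard = k} := by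
        intro k A hA
        ext Hg
        rw [hA]
        simp only [Set.mem_setOf_eq]
        constructor
        · rintro ⟨-, h1, h2, h3⟩
          exact ⟨h1, h2, h3⟩
        · rintro ⟨h1, h2, h3⟩
          exact ⟨hpc, h1, h2, h3⟩
      have hn2 : ({b | ((W, F), b) ∈ A₂}).ncard = compCount 𝒟 2 := by
        rw [hfA 2 A₂ hA₂, hfib 2,
          Set.ncard_image_of_injective _ (SimpleGraph.map_injective ι)]
        rfl
      have hn1 : ({b | ((W, F), b) ∈ A₁}).ncard = compCount 𝒟 1 := by
        rw [hfA 1 A₁ hA₁, hfib 1,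
          Set.ncard_image_of_injective _ (SimpleGraph.map_injective ι)]
        rfl
      rw [hn2, hn1]
      exact hHε m (le_trans (le_max_left _ _) hc4) 𝒟 hBA𝒟
    · have hempty : ∀ (k : ℕ) (A : Set ((Set (Fin n) × SimpleGraph (Fin n)) × SimpleGraph (Fin n))),
          A = {x | cond x.1 ∧ EdgesIn x.2 x.1.1 ∧ x.2 ⊔ x.1.2 ∈ 𝒢 ∧ (compsIn x.2 x.1.1).ncard = k} →
          {b | (p, b) ∈ A} = ∅ := by
        intro k A hA
        ext b
        rw [hA]
        simp only [Set.mem_setOf_eq, Set.mem_empty_iff_false, iff_false]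
        exact fun h => hp h.1
      rw [hempty 2 A₂ hA₂, hempty 1 A₁ hA₁]
      simp
  have step4 : A₁.ncard ≤ compCount 𝒢 i := by
    have key := Set.ncard_le_ncard_of_injOn (fun x => x.2 ⊔ x.1.2)
      (s := A₁) (t := {G | G ∈ 𝒢 ∧ numComponents G = i}) ?_ ?_ (Set.toFinite _)
    · simpa [compCount] using key
    · rintro ⟨⟨W, F⟩, Hg⟩ ⟨hcd, hEH, hmem, h1⟩
      rw [hcond] at hcd
      dsimp only at hcd hEH hmem h1 ⊢
      refine ⟨hmem, ?_⟩
      show numComponents (Hg ⊔ F) = i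
      have := numComponents_split (G := Hg ⊔ F) (S := W) (sep_sup hEH hcd.1)
      rw [compsIn_sup_left hEH hcd.1, compsIn_sup_right hEH hcd.1, h1, hcd.2.1] at this
      omega
    · rintro ⟨⟨W, F⟩, Hg⟩ ⟨hcd, hEH, hmem, h1⟩ ⟨⟨W', F'⟩, Hg'⟩ ⟨hcd', hEH', hmem', h1'⟩ heq
      rw [hcond] at hcd hcd'
      dsimp only at hcd hEH hmem h1 hcd' hEH' hmem' h1' heq
      obtain ⟨htop, hrW, hrWc⟩ := recover hcd.1 hEH h1 hcd.2.2.1 rfl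
      obtain ⟨htop', hrW', hrWc'⟩ := recover hcd'.1 hEH' h1' hcd'.2.2.1 rfl
      have hWW : W = W' := by rw [← htop, ← htop', heq]
      subst hWW
      have hH : Hg = Hg' := by rw [← hrW, ← hrW', heq]
      have hF : F = F' := by rw [← hrWc, ← hrWc', heq]
      simp [hH, hF]
  calc (i : ℝ) * compCount 𝒢 (i + 1) = ((i * compCount 𝒢 (i + 1) : ℕ) : ℝ) := by push_cast; ring
    _ ≤ (A₂.ncard : ℝ) := by exact_mod_cast le_trans step1 step2
    _ ≤ (1/2 + ε') * A₁.ncard := step3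
    _ ≤ (1/2 + ε') * compCount 𝒢 i := by
        exact mul_le_mul_of_nonneg_left (by exact_mod_cast step4) hc
end

section
/- Let (a_T) be nonnegative reals indexed by labeled trees T (on initial segments of ℕ), invariant under relabeling, and supermultiplicative in the sense that for any labeled tree U with a marked edge e splitting U into components T₁, T₂, one has a_U ≥ a_{T₁}·a_{T₂}. Define Y = Σ_{T rooted labeled tree} a_T/|T|! and Y^u = Σ_{U labeled tree} a_U/|U|!, and suppose Y < ∞. Then Y − Y^u ≥ (1/2)·Y², and consequently Y^u ≤ 1/2. -/
open SimpleGraph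
open scoped Classical
namespace Stmt13Aux
variable {V : Type*}




/-- Lift a walk through `SimpleGraph.map` along an embedding. -/
lemma lift_walk {f : V ↪ W} {T : SimpleGraph V} :
    ∀ {u v : W} (p : (T.map f).Walk u v) {x y : V}, f x = u → f y = v →
      ∃ q : T.Walk x y, q.support.map f = p.support ∧
        q.edges.map (Sym2.map f) = p.edges := by
  intro u v p
  induction p with
  | nil =>
    intro x y hx hy
    have : x = y := f.injective (hx.trans hy.symm)
    subst this
    subst hx
    exact ⟨.nil, by simp, by simp⟩
  | @cons u b v h p ih =>
    intro x y hx hy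
    obtain ⟨-, u', b', hadj, hu', hb'⟩ := h
    have hxu : u' = x := f.injective (by rw [hu', hx])
    subst hxu
    obtain ⟨q, hq1, hq2⟩ := ih hb' hy
    refine ⟨.cons hadj q, ?_, ?_⟩
    · simp [hq1, hx]; rfl
    · simp [hq2, ← hx, ← hb']; show _ = s(u, b) :: p.edges; rw [hx, hb']

lemma isAcyclic_map (f : V ↪ W) {T : SimpleGraph V} (hT : T.IsAcyclic) :
    (T.map f).IsAcyclic := by
  intro v c hc
  cases c with
  | nil => exact hc.not_of_nil
  | @cons _ b _ h p =>
    obtain ⟨-, u', b', hadj, hu', hb'⟩ := id h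
    obtain ⟨q, hq1, hq2⟩ := lift_walk (Walk.cons h p) hu' hu'
    refine hT q ?_
    rw [Walk.isCycle_def] at hc ⊢
    refine ⟨?_, ?_, ?_⟩
    · rw [Walk.isTrail_def]
      exact (List.Nodup.of_map _ (hq2 ▸ hc.1.edges_nodup))
    · intro hnil
      subst hnil
      have := hq1
      simp only [Walk.support_nil, List.map_cons, List.map_nil] at this
      have h2 := congrArg List.length this
      simp [Walk.support_cons] at h2
    · have : q.support.tail.map f = (Walk.cons h p).support.tail := by
        rw [← hq1, List.map_tail]
      exact List.Nodup.of_map _ (this ▸ hc.2.2)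

/-- Vertices of a walk stay on one side if adjacency preserves sides. -/
lemma support_side {G : SimpleGraph V} (P : Set V)
    (h : ∀ u v, G.Adj u v → (u ∈ P ↔ v ∈ P)) :
    ∀ {u v : V} (p : G.Walk u v), u ∈ P → ∀ w ∈ p.support, w ∈ P := by
  intro u v p
  induction p with
  | nil => intro hu w hw; simp at hw; subst hw; exact hu
  | @cons u b v hadj p ih =>
    intro hu w hw
    rw [Walk.support_cons, List.mem_cons] at hw
    rcases hw with rfl | hw
    · exact hu
    · exact ih ((h _ _ hadj).mp hu) w hw

lemma sup_isAcyclic {H₁ H₂ : SimpleGraph V} (P : Set V)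
    (h₁ : ∀ u v, H₁.Adj u v → u ∈ P ∧ v ∈ P)
    (h₂ : ∀ u v, H₂.Adj u v → u ∉ P ∧ v ∉ P)
    (a₁ : H₁.IsAcyclic) (a₂ : H₂.IsAcyclic) : (H₁ ⊔ H₂).IsAcyclic := by
  have hside : ∀ u v, (H₁ ⊔ H₂).Adj u v → (u ∈ P ↔ v ∈ P) := by
    rintro u v (h | h)
    · simp [(h₁ u v h).1, (h₁ u v h).2]
    · simp [(h₂ u v h).1, (h₂ u v h).2]
  intro v c hc
  by_cases hv : v ∈ P
  · have hsupp := support_side P hside c hv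
    have hedges : ∀ e ∈ c.edges, e ∈ H₁.edgeSet := by
      intro e he
      have hee := c.edges_subset_edgeSet he
      induction e with
      | h a b =>
        have ha : a ∈ P := hsupp a (Walk.fst_mem_support_of_mem_edges c he)
        have hb : b ∈ P := hsupp b (Walk.snd_mem_support_of_mem_edges c he)
        rcases hee with h | h
        · exact h
        · exact absurd ha (h₂ a b h).1
    exact a₁ (c.transfer H₁ hedges) (hc.transfer hedges)
  · have hside' : ∀ u v, (H₁ ⊔ H₂).Adj u v → (u ∈ Pᶜ ↔ v ∈ Pᶜ) := by
      intro u v h; simp only [Set.mem_compl_iff]; rw [hside u v h]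
    have hsupp := support_side Pᶜ hside' c hv
    have hedges : ∀ e ∈ c.edges, e ∈ H₂.edgeSet := by
      intro e he
      have hee := c.edges_subset_edgeSet he
      induction e with
      | h a b =>
        have ha : a ∉ P := hsupp a (Walk.fst_mem_support_of_mem_edges c he)
        rcases hee with h | h
        · exact absurd (h₁ a b h).1 ha
        · exact h
    exact a₂ (c.transfer H₂ hedges) (hc.transfer hedges)



lemma add_edge_isAcyclic {D : SimpleGraph V} (hD : D.IsAcyclic) {x y : V} (hxy : x ≠ y)
    (hreach : ¬D.Reachable x y) : (D ⊔ fromEdgeSet {s(x, y)}).IsAcyclic := by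
  have hnadj : ∀ u v : V, D.Adj u v → s(u, v) ≠ s(x, y) := by
    intro u v h he
    rw [Sym2.eq_iff] at he
    rcases he with ⟨rfl, rfl⟩ | ⟨rfl, rfl⟩
    · exact hreach h.reachable
    · exact hreach h.symm.reachable
  have hadjxy : (D ⊔ fromEdgeSet {s(x, y)}).Adj x y :=
    Or.inr ⟨rfl, hxy⟩
  have hbridge : (D ⊔ fromEdgeSet {s(x, y)}).IsBridge s(x, y) := by
    rw [isBridge_iff]
    intro hr
    apply hreach
    obtain ⟨p⟩ := hr
    have hedges : ∀ e ∈ p.edges, e ∈ D.edgeSet := by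
      intro e he
      have h2 := p.edges_subset_edgeSet he
      rw [edgeSet_deleteEdges, edgeSet_sup] at h2
      obtain ⟨h3 | h3, h4⟩ := h2
      · exact h3
      · rw [edgeSet_fromEdgeSet] at h3
        exact absurd h3.1 h4
    exact (p.transfer D hedges).reachable
  intro v c hc
  have hnot := (isBridge_iff_forall_cycle_notMem hadjxy).mp hbridge c hc
  have hedges : ∀ e ∈ c.edges, e ∈ D.edgeSet := by
    intro e he
    have h2 := c.edges_subset_edgeSet he
    rw [edgeSet_sup] at h2
    rcases h2 with h3 | h3
    · exact h3
    · rw [edgeSet_fromEdgeSet, Set.mem_diff, Set.mem_singleton_iff] at h3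
      exact absurd (h3.1 ▸ he) hnot
  exact hD (c.transfer D hedges) (hc.transfer hedges)



section Join
variable {α β : Type*} (T₁ : SimpleGraph α) (T₂ : SimpleGraph β)
  (f₁ : α ↪ V) (f₂ : β ↪ V) (r₁ : α) (r₂ : β)

/-- Join two graphs mapped into a common vertex type by an edge between the images
of the roots. -/
def join : SimpleGraph V :=
  T₁.map f₁ ⊔ T₂.map f₂ ⊔ fromEdgeSet {s(f₁ r₁, f₂ r₂)}

variable {f₁ f₂}

lemma join_swap (hcompl : ∀ w, w ∈ Set.range f₁ ↔ w ∉ Set.range f₂) :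
    join T₂ T₁ f₂ f₁ r₂ r₁ = join T₁ T₂ f₁ f₂ r₁ r₂ := by
  unfold join
  rw [Sym2.eq_swap, sup_comm (T₂.map f₂) (T₁.map f₁)]

variable (hcompl : ∀ w, w ∈ Set.range f₁ ↔ w ∉ Set.range f₂)
include hcompl

lemma join_ne_xy : f₁ r₁ ≠ f₂ r₂ := by
  intro h
  exact (hcompl (f₁ r₁)).mp ⟨r₁, rfl⟩ (h ▸ ⟨r₂, rfl⟩)

lemma join_adj_xy : (join T₁ T₂ f₁ f₂ r₁ r₂).Adj (f₁ r₁) (f₂ r₂) :=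
  Or.inr ⟨rfl, join_ne_xy r₁ r₂ hcompl⟩

lemma map_edge_ne_xy {u v : V} (h : (T₁.map f₁).Adj u v) : s(u, v) ≠ s(f₁ r₁, f₂ r₂) := by
  obtain ⟨-, u', v', _, rfl, rfl⟩ := h
  intro he
  rw [Sym2.eq_iff] at he
  rcases he with ⟨h1, h2⟩ | ⟨h1, h2⟩
  · exact (hcompl (f₂ r₂)).mp ⟨v', h2⟩ ⟨r₂, rfl⟩
  · exact (hcompl (f₂ r₂)).mp ⟨u', h1⟩ ⟨r₂, rfl⟩

lemma map_edge_ne_xy' {u v : V} (h : (T₂.map f₂).Adj u v) : s(u, v) ≠ s(f₁ r₁, f₂ r₂) := by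
  obtain ⟨-, u', v', _, rfl, rfl⟩ := h
  intro he
  rw [Sym2.eq_iff] at he
  rcases he with ⟨h1, h2⟩ | ⟨h1, h2⟩
  · exact (hcompl (f₁ r₁)).mp ⟨r₁, rfl⟩ ⟨u', h1⟩
  · exact (hcompl (f₁ r₁)).mp ⟨r₁, rfl⟩ ⟨v', h2⟩

lemma join_deleteEdges :
    (join T₁ T₂ f₁ f₂ r₁ r₂).deleteEdges {s(f₁ r₁, f₂ r₂)} = T₁.map f₁ ⊔ T₂.map f₂ := by
  ext u v
  rw [deleteEdges_adj]
  constructor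
  · rintro ⟨(h | h) | h, hne⟩
    · exact Or.inl h
    · exact Or.inr h
    · rw [fromEdgeSet_adj] at h
      exact absurd h.1 hne
  · rintro h
    refine ⟨Or.inl h, ?_⟩
    rw [Set.mem_singleton_iff]
    rcases h with h | h
    · exact map_edge_ne_xy T₁ r₁ r₂ hcompl h
    · exact map_edge_ne_xy' T₂ r₁ r₂ hcompl h

lemma join_adj_apply {u v : α} :
    (join T₁ T₂ f₁ f₂ r₁ r₂).Adj (f₁ u) (f₁ v) ↔ T₁.Adj u v := by
  constructor
  · rintro ((h | h) | h)
    · obtain ⟨-, u', v', hadj, hu, hv⟩ := h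
      rwa [f₁.injective hu, f₁.injective hv] at hadj
    · obtain ⟨-, u', v', _, hu, hv⟩ := h
      exact absurd ⟨u', hu⟩ ((hcompl (f₁ u)).mp ⟨u, rfl⟩)
    · rw [fromEdgeSet_adj] at h
      obtain ⟨h1, -⟩ := h
      rw [Set.mem_singleton_iff, Sym2.eq_iff] at h1
      exfalso
      rcases h1 with ⟨h1, h2⟩ | ⟨h1, h2⟩
      · exact (hcompl (f₂ r₂)).mp ⟨v, h2⟩ ⟨r₂, rfl⟩
      · exact (hcompl (f₂ r₂)).mp ⟨u, h1⟩ ⟨r₂, rfl⟩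
  · intro h
    exact Or.inl (Or.inl ⟨f₁.injective.ne h.ne, u, v, h, rfl, rfl⟩)

/-- The deleted graph preserves sides. -/
lemma join_del_side {u v : V}
    (h : (T₁.map f₁ ⊔ T₂.map f₂).Adj u v) : (u ∈ Set.range f₁ ↔ v ∈ Set.range f₁) := by
  rcases h with h | h
  · obtain ⟨-, u', v', _, rfl, rfl⟩ := h
    simp [Set.mem_range]
  · obtain ⟨-, u', v', _, rfl, rfl⟩ := h
    constructor <;> intro hh
    · exact absurd ⟨u', rfl⟩ ((hcompl _).mp hh)
    · exact absurd ⟨v', rfl⟩ ((hcompl _).mp hh)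

lemma join_reach_set (hT₁ : T₁.Connected) :
    {w | ((join T₁ T₂ f₁ f₂ r₁ r₂).deleteEdges {s(f₁ r₁, f₂ r₂)}).Reachable (f₁ r₁) w}
      = Set.range f₁ := by
  rw [join_deleteEdges T₁ T₂ r₁ r₂ hcompl]
  ext w
  simp only [Set.mem_setOf_eq]
  constructor
  · intro hr
    obtain ⟨p⟩ := hr
    exact support_side (Set.range f₁) (fun u v h => join_del_side T₁ T₂ hcompl h) p
      ⟨r₁, rfl⟩ w p.end_mem_support
  · rintro ⟨u, rfl⟩
    exact (hT₁ r₁ u).map (⟨⇑f₁, fun h => Or.inl ⟨f₁.injective.ne h.ne, _, _, h, rfl, rfl⟩⟩ :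
      T₁ →g (T₁.map f₁ ⊔ T₂.map f₂))

lemma join_isTree (hT₁ : T₁.IsTree) (hT₂ : T₂.IsTree) :
    (join T₁ T₂ f₁ f₂ r₁ r₂).IsTree := by
  let hom₁ : T₁ →g join T₁ T₂ f₁ f₂ r₁ r₂ :=
    ⟨⇑f₁, fun h => Or.inl (Or.inl ⟨f₁.injective.ne h.ne, _, _, h, rfl, rfl⟩)⟩
  let hom₂ : T₂ →g join T₁ T₂ f₁ f₂ r₁ r₂ :=
    ⟨⇑f₂, fun h => Or.inl (Or.inr ⟨f₂.injective.ne h.ne, _, _, h, rfl, rfl⟩)⟩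
  have hreachx : ∀ w : V, (join T₁ T₂ f₁ f₂ r₁ r₂).Reachable (f₁ r₁) w := by
    intro w
    by_cases hw : w ∈ Set.range f₁
    · obtain ⟨u, rfl⟩ := hw
      exact (hT₁.isConnected r₁ u).map hom₁
    · have hw2 : w ∈ Set.range f₂ := by
        by_contra hw2
        exact hw ((hcompl w).mpr hw2)
      obtain ⟨u, rfl⟩ := hw2
      exact ((join_adj_xy T₁ T₂ r₁ r₂ hcompl).reachable).trans ((hT₂.isConnected r₂ u).map hom₂)
  constructor
  · have : Nonempty V := ⟨f₁ r₁⟩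
    exact Connected.mk fun u v => ((hreachx u).symm).trans (hreachx v)
  · have hacy : (T₁.map f₁ ⊔ T₂.map f₂).IsAcyclic := by
      refine sup_isAcyclic (Set.range f₁) ?_ ?_ (isAcyclic_map f₁ hT₁.IsAcyclic)
        (isAcyclic_map f₂ hT₂.IsAcyclic)
      · rintro u v ⟨-, u', v', _, rfl, rfl⟩
        exact ⟨⟨u', rfl⟩, ⟨v', rfl⟩⟩
      · rintro u v ⟨-, u', v', _, rfl, rfl⟩
        exact ⟨fun h => (hcompl _).mp h ⟨u', rfl⟩, fun h => (hcompl _).mp h ⟨v', rfl⟩⟩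
    have hreach : ¬(T₁.map f₁ ⊔ T₂.map f₂).Reachable (f₁ r₁) (f₂ r₂) := by
      intro hr
      obtain ⟨p⟩ := hr
      have := support_side (Set.range f₁) (fun u v h => join_del_side T₁ T₂ hcompl h) p
        ⟨r₁, rfl⟩ _ p.end_mem_support
      exact (hcompl _).mp this ⟨r₂, rfl⟩
    exact add_edge_isAcyclic hacy (join_ne_xy r₁ r₂ hcompl) hreach

lemma hcompl_swap : ∀ w, w ∈ Set.range ⇑f₂ ↔ w ∉ Set.range ⇑f₁ := by
  intro w
  rw [hcompl w]
  exact not_not.symm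

lemma join_induce_iso :
    Nonempty ((join T₁ T₂ f₁ f₂ r₁ r₂).induce (Set.range ⇑f₁) ≃g T₁) := by
  refine ⟨⟨(Equiv.ofInjective ⇑f₁ f₁.injective).symm, ?_⟩⟩
  intro a b
  have ha : f₁ ((Equiv.ofInjective ⇑f₁ f₁.injective).symm a) = ↑a :=
    Equiv.apply_ofInjective_symm f₁.injective a
  have hb : f₁ ((Equiv.ofInjective ⇑f₁ f₁.injective).symm b) = ↑b :=
    Equiv.apply_ofInjective_symm f₁.injective b
  show T₁.Adj _ _ ↔ (join T₁ T₂ f₁ f₂ r₁ r₂).Adj ↑a ↑b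
  rw [← ha, ← hb, join_adj_apply T₁ T₂ r₁ r₂ hcompl]

lemma join_reach_set' (hT₂ : T₂.Connected) :
    {w | ((join T₁ T₂ f₁ f₂ r₁ r₂).deleteEdges {s(f₁ r₁, f₂ r₂)}).Reachable (f₂ r₂) w}
      = Set.range ⇑f₂ := by
  rw [← join_swap T₁ T₂ r₁ r₂ hcompl, Sym2.eq_swap]
  exact join_reach_set T₂ T₁ r₂ r₁ (hcompl_swap hcompl) hT₂

lemma join_adj_apply' {u v : β} :
    (join T₁ T₂ f₁ f₂ r₁ r₂).Adj (f₂ u) (f₂ v) ↔ T₂.Adj u v := by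
  rw [← join_swap T₁ T₂ r₁ r₂ hcompl]
  exact join_adj_apply T₂ T₁ r₂ r₁ (hcompl_swap hcompl)

lemma join_induce_iso' :
    Nonempty ((join T₁ T₂ f₁ f₂ r₁ r₂).induce (Set.range ⇑f₂) ≃g T₂) := by
  rw [← join_swap T₁ T₂ r₁ r₂ hcompl]
  exact join_induce_iso T₂ T₁ r₂ r₁ (hcompl_swap hcompl)

end Join

section PerM

variable (a : (m : ℕ) → SimpleGraph (Fin m) → ℝ)

/-- Sum of weights over labeled trees on `Fin k`. -/
noncomputable def fval (k : ℕ) : ℝ :=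
  ∑ G : SimpleGraph (Fin k), if G.IsTree then a k G else 0

variable {m : ℕ}

/-- Canonical (monotone) embedding of `Fin S.card` onto a finset `S`. -/
noncomputable abbrev emb (S : Finset (Fin m)) : Fin S.card ↪ Fin m :=
  (S.orderEmbOfFin rfl).toEmbedding

lemma range_emb (S : Finset (Fin m)) : Set.range ⇑(emb S) = ↑S := by
  simpa using S.range_orderEmbOfFin rfl

lemma hcompl_emb (S : Finset (Fin m)) :
    ∀ w, w ∈ Set.range ⇑(emb S) ↔ w ∉ Set.range ⇑(emb Sᶜ) := by
  intro w
  rw [range_emb, range_emb]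
  simp

/-- Index type for the dissymmetry injection: a label set together with two rooted
trees on the two sides. -/
abbrev TT (m : ℕ) :=
  Σ S : Finset (Fin m),
    (SimpleGraph (Fin S.card) × Fin S.card) × (SimpleGraph (Fin Sᶜ.card) × Fin Sᶜ.card)

/-- The dissymmetry map: join the two rooted trees along the canonical labelings. -/
noncomputable def phi (j : TT m) : SimpleGraph (Fin m) × Fin m × Fin m :=
  (join j.2.1.1 j.2.2.1 (emb j.1) (emb j.1ᶜ) j.2.1.2 j.2.2.2,
    emb j.1 j.2.1.2, emb j.1ᶜ j.2.2.2)

lemma phi_injOn (j j' : TT m)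
    (hj : j.2.1.1.IsTree ∧ j.2.2.1.IsTree) (hj' : j'.2.1.1.IsTree ∧ j'.2.2.1.IsTree)
    (heq : phi j = phi j') : j = j' := by
  obtain ⟨S, ⟨⟨T₁, r₁⟩, ⟨T₂, r₂⟩⟩⟩ := j
  obtain ⟨S', ⟨⟨T₁', r₁'⟩, ⟨T₂', r₂'⟩⟩⟩ := j'
  obtain ⟨hT₁, hT₂⟩ := hj
  obtain ⟨hT₁', hT₂'⟩ := hj'
  simp only [phi, Prod.mk.injEq] at heq
  obtain ⟨hW, hx, hy⟩ := heq
  -- recover the label sets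
  have h1 := join_reach_set T₁ T₂ r₁ r₂ (hcompl_emb S) hT₁.isConnected
  have h1' := join_reach_set T₁' T₂' r₁' r₂' (hcompl_emb S') hT₁'.isConnected
  rw [← hW, ← hx, ← hy] at h1'
  have hSS : S = S' := by
    apply Finset.coe_injective
    rw [← range_emb S, ← range_emb S', ← h1, ← h1']
  subst hSS
  have hr₁ : r₁ = r₁' := (emb S).injective hx
  have hr₂ : r₂ = r₂' := (emb Sᶜ).injective hy
  have hT1eq : T₁ = T₁' := by
    ext u v
    rw [← join_adj_apply T₁ T₂ r₁ r₂ (hcompl_emb S),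
      ← join_adj_apply T₁' T₂' r₁' r₂' (hcompl_emb S), hW]
  have hT2eq : T₂ = T₂' := by
    ext u v
    rw [← join_adj_apply' T₁ T₂ r₁ r₂ (hcompl_emb S),
      ← join_adj_apply' T₁' T₂' r₁' r₂' (hcompl_emb S), hW]
  subst hr₁; subst hr₂; subst hT1eq; subst hT2eq
  rfl

set_option maxHeartbeats 1000000 in
lemma key_sum_le (hnn : ∀ m G, 0 ≤ a m G)
    (hsuper' : ∀ (n : ℕ) (W : SimpleGraph (Fin n)) (x y : Fin n), W.IsTree → W.Adj x y →
      ∀ (n₁ n₂ : ℕ) (T₁ : SimpleGraph (Fin n₁)) (T₂ : SimpleGraph (Fin n₂)), n₁ + n₂ = n →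
      Nonempty ((W.induce {w | (W.deleteEdges {s(x, y)}).Reachable x w}) ≃g T₁) →
      Nonempty ((W.induce {w | (W.deleteEdges {s(x, y)}).Reachable y w}) ≃g T₂) →
      a n₁ T₁ * a n₂ T₂ ≤ a n W) :
    (∑ j : TT m, if j.2.1.1.IsTree ∧ j.2.2.1.IsTree
        then a _ j.2.1.1 * a _ j.2.2.1 else 0)
      ≤ ∑ p : SimpleGraph (Fin m) × Fin m × Fin m,
          if p.1.IsTree ∧ p.1.Adj p.2.1 p.2.2 then a m p.1 else 0 := by
  classical
  set P : TT m → Prop := fun j => j.2.1.1.IsTree ∧ j.2.2.1.IsTree with hP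
  rw [← Finset.sum_filter (s := Finset.univ) P
    (fun j => a _ j.2.1.1 * a _ j.2.2.1)]
  rw [← Finset.sum_filter (s := Finset.univ)
    (fun p : SimpleGraph (Fin m) × Fin m × Fin m => p.1.IsTree ∧ p.1.Adj p.2.1 p.2.2)
    (fun p => a m p.1)]
  have step1 : ∀ j ∈ Finset.univ.filter P,
      a _ j.2.1.1 * a _ j.2.2.1 ≤ a m (phi j).1 := by
    rintro ⟨S, ⟨⟨T₁, r₁⟩, ⟨T₂, r₂⟩⟩⟩ hj
    rw [Finset.mem_filter] at hj
    obtain ⟨-, hT₁, hT₂⟩ := hj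
    have htree := join_isTree T₁ T₂ r₁ r₂ (hcompl_emb S) hT₁ hT₂
    have hadj := join_adj_xy T₁ T₂ r₁ r₂ (hcompl_emb S)
    refine hsuper' m _ _ _ htree hadj S.card Sᶜ.card T₁ T₂ (by simp [Finset.card_add_card_compl]) ?_ ?_
    · rw [join_reach_set T₁ T₂ r₁ r₂ (hcompl_emb S) hT₁.isConnected]
      exact join_induce_iso T₁ T₂ r₁ r₂ (hcompl_emb S)
    · rw [join_reach_set' T₁ T₂ r₁ r₂ (hcompl_emb S) hT₂.isConnected]
      exact join_induce_iso' T₁ T₂ r₁ r₂ (hcompl_emb S)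
  calc ∑ j ∈ Finset.univ.filter P, a _ j.2.1.1 * a _ j.2.2.1
      ≤ ∑ j ∈ Finset.univ.filter P, a m (phi j).1 := Finset.sum_le_sum step1
    _ = ∑ p ∈ (Finset.univ.filter P).image phi, a m p.1 := by
        rw [Finset.sum_image]
        intro x hx y hy hxy
        rw [Finset.mem_coe, Finset.mem_filter] at hx hy
        exact phi_injOn x y hx.2 hy.2 hxy
    _ ≤ ∑ p ∈ Finset.univ.filter
          (fun p : SimpleGraph (Fin m) × Fin m × Fin m =>
            p.1.IsTree ∧ p.1.Adj p.2.1 p.2.2), a m p.1 := by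
        refine Finset.sum_le_sum_of_subset_of_nonneg ?_ (fun p _ _ => hnn m p.1)
        intro p hp
        rw [Finset.mem_image] at hp
        obtain ⟨j, hj, rfl⟩ := hp
        rw [Finset.mem_filter] at hj
        obtain ⟨-, hT₁, hT₂⟩ := hj
        rw [Finset.mem_filter]
        obtain ⟨S, ⟨⟨T₁, r₁⟩, ⟨T₂, r₂⟩⟩⟩ := j
        exact ⟨Finset.mem_univ _,
          join_isTree T₁ T₂ r₁ r₂ (hcompl_emb S) hT₁ hT₂,
          join_adj_xy T₁ T₂ r₁ r₂ (hcompl_emb S)⟩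

lemma count_rhs :
    (∑ p : SimpleGraph (Fin m) × Fin m × Fin m,
        if p.1.IsTree ∧ p.1.Adj p.2.1 p.2.2 then a m p.1 else 0)
      = 2 * ((m : ℝ) - 1) * fval a m := by
  classical
  rw [Fintype.sum_prod_type]
  have hfval : fval a m = ∑ G : SimpleGraph (Fin m), if G.IsTree then a m G else 0 := rfl
  rw [hfval, Finset.mul_sum]
  refine Finset.sum_congr rfl (fun G _ => ?_)
  by_cases hG : G.IsTree
  · simp only [hG, true_and, if_pos]
    have h1 : (∑ yz : Fin m × Fin m, if G.Adj yz.1 yz.2 then a m G else 0)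
          = ∑ x : Fin m, (G.degree x : ℝ) * a m G := by
      rw [Fintype.sum_prod_type]
      refine Finset.sum_congr rfl (fun u _ => ?_)
      rw [← Finset.sum_filter, Finset.sum_const, ← SimpleGraph.neighborFinset_eq_filter,
        nsmul_eq_mul]
      rfl
    rw [h1, ← Finset.sum_mul, ← Nat.cast_sum, SimpleGraph.sum_degrees_eq_twice_card_edges]
    have hE : (G.edgeFinset.card : ℝ) = (m : ℝ) - 1 := by
      have h2 := hG.card_edgeFinset
      rw [Fintype.card_fin] at h2
      have h3 : (G.edgeFinset.card : ℝ) + 1 = m := by exact_mod_cast congrArg Nat.cast h2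
      linarith
    push_cast
    rw [hE]
  · simp [hG]

lemma count_inner (k : ℕ) :
    (∑ q : SimpleGraph (Fin k) × Fin k, if q.1.IsTree then a k q.1 else 0)
      = (k : ℝ) * fval a k := by
  rw [Fintype.sum_prod_type]
  have : ∀ T : SimpleGraph (Fin k),
      (∑ _r : Fin k, if T.IsTree then a k T else 0)
        = (k : ℝ) * (if T.IsTree then a k T else 0) := by
    intro T
    rw [Finset.sum_const, Finset.card_univ, Fintype.card_fin, nsmul_eq_mul]
  rw [Finset.sum_congr rfl (fun T _ => this T), ← Finset.mul_sum]
  rfl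

lemma count_lhs :
    (∑ j : TT m, if j.2.1.1.IsTree ∧ j.2.2.1.IsTree
        then a _ j.2.1.1 * a _ j.2.2.1 else 0)
      = ∑ k ∈ Finset.range (m + 1), (m.choose k : ℝ) *
          (((k : ℝ) * fval a k) * (((m - k : ℕ) : ℝ) * fval a (m - k))) := by
  classical
  have hpair : ∀ (n₁ n₂ : ℕ),
      (∑ q : (SimpleGraph (Fin n₁) × Fin n₁) × (SimpleGraph (Fin n₂) × Fin n₂),
          if q.1.1.IsTree ∧ q.2.1.IsTree then a n₁ q.1.1 * a n₂ q.2.1 else 0)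
        = ((n₁ : ℝ) * fval a n₁) * ((n₂ : ℝ) * fval a n₂) := by
    intro n₁ n₂
    rw [← count_inner a n₁, ← count_inner a n₂, Finset.sum_mul_sum,
      Fintype.sum_prod_type]
    refine Finset.sum_congr rfl (fun q₁ _ => Finset.sum_congr rfl (fun q₂ _ => ?_))
    rw [ite_zero_mul_ite_zero]
  have hsig : (∑ j : TT m, if j.2.1.1.IsTree ∧ j.2.2.1.IsTree
        then a _ j.2.1.1 * a _ j.2.2.1 else 0)
      = ∑ S : Finset (Fin m), (((S.card : ℝ) * fval a S.card) *
          ((Sᶜ.card : ℝ) * fval a Sᶜ.card)) := by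
    rw [← Finset.univ_sigma_univ, Finset.sum_sigma]
    exact Finset.sum_congr rfl (fun S _ => hpair S.card Sᶜ.card)
  rw [hsig]
  have hcompl_card : ∀ S : Finset (Fin m), Sᶜ.card = m - S.card := by
    intro S
    rw [Finset.card_compl, Fintype.card_fin]
  have hgg : ∀ S : Finset (Fin m),
      (((S.card : ℝ) * fval a S.card) * ((Sᶜ.card : ℝ) * fval a Sᶜ.card))
        = (((S.card : ℝ) * fval a S.card) *
            ((((m - S.card : ℕ)) : ℝ) * fval a (m - S.card))) := by
    intro S
    rw [hcompl_card S]
  rw [Finset.sum_congr rfl (fun S _ => hgg S), ← Finset.powerset_univ,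
    Finset.sum_powerset]
  have hcard : (Finset.univ : Finset (Fin m)).card = m := by
    rw [Finset.card_univ, Fintype.card_fin]
  rw [hcard]
  refine Finset.sum_congr rfl (fun k hk => ?_)
  have hconst : ∀ S ∈ Finset.powersetCard k (Finset.univ : Finset (Fin m)),
      (((S.card : ℝ) * fval a S.card) *
          ((((m - S.card : ℕ)) : ℝ) * fval a (m - S.card)))
        = (((k : ℝ) * fval a k) * ((((m - k : ℕ)) : ℝ) * fval a (m - k))) := by
    intro S hS
    rw [(Finset.mem_powersetCard.mp hS).2]
  rw [Finset.sum_congr rfl hconst, Finset.sum_const, Finset.card_powersetCard,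
    hcard, nsmul_eq_mul]

lemma fval_nonneg (hnn : ∀ m G, 0 ≤ a m G) (k : ℕ) : 0 ≤ fval a k :=
  Finset.sum_nonneg fun G _ => by split_ifs with h; exacts [hnn k G, le_refl 0]

lemma fval_zero : fval a 0 = 0 := by
  refine Finset.sum_eq_zero fun G _ => ?_
  rw [if_neg]
  intro h
  obtain ⟨x⟩ := h.isConnected.nonempty
  exact x.elim0

lemma key_div (hnn : ∀ m G, 0 ≤ a m G)
    (hsuper' : ∀ (n : ℕ) (W : SimpleGraph (Fin n)) (x y : Fin n), W.IsTree → W.Adj x y →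
      ∀ (n₁ n₂ : ℕ) (T₁ : SimpleGraph (Fin n₁)) (T₂ : SimpleGraph (Fin n₂)), n₁ + n₂ = n →
      Nonempty ((W.induce {w | (W.deleteEdges {s(x, y)}).Reachable x w}) ≃g T₁) →
      Nonempty ((W.induce {w | (W.deleteEdges {s(x, y)}).Reachable y w}) ≃g T₂) →
      a n₁ T₁ * a n₂ T₂ ≤ a n W) (m : ℕ) :
    (∑ kl ∈ Finset.HasAntidiagonal.antidiagonal m,
        ((kl.1 : ℝ) * fval a kl.1 / (kl.1.factorial : ℝ)) *
        ((kl.2 : ℝ) * fval a kl.2 / (kl.2.factorial : ℝ)))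
      ≤ 2 * ((m : ℝ) - 1) * fval a m / (m.factorial : ℝ) := by
  have KEY : (∑ k ∈ Finset.range (m + 1), (m.choose k : ℝ) *
        (((k : ℝ) * fval a k) * (((m - k : ℕ) : ℝ) * fval a (m - k))))
      ≤ 2 * ((m : ℝ) - 1) * fval a m := by
    rw [← count_lhs a, ← count_rhs a]
    exact key_sum_le a hnn hsuper'
  rw [Finset.Nat.sum_antidiagonal_eq_sum_range_succ_mk]
  have hfac : (0 : ℝ) < (m.factorial : ℝ) := by exact_mod_cast m.factorial_pos
  have hterm : ∀ k ∈ Finset.range (m + 1),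
      ((k : ℝ) * fval a k / (k.factorial : ℝ)) *
        (((m - k : ℕ) : ℝ) * fval a (m - k) / ((m - k).factorial : ℝ))
      = (m.choose k : ℝ) *
          (((k : ℝ) * fval a k) * (((m - k : ℕ) : ℝ) * fval a (m - k))) / (m.factorial : ℝ) := by
    intro k hk
    have hkm : k ≤ m := Nat.lt_succ_iff.mp (Finset.mem_range.mp hk)
    have hmf : (m.factorial : ℝ) = (m.choose k : ℝ) * (k.factorial : ℝ) * ((m - k).factorial : ℝ) := by
      exact_mod_cast (Nat.choose_mul_factorial_mul_factorial hkm).symm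
    have hk0 : (k.factorial : ℝ) ≠ 0 := by exact_mod_cast k.factorial_ne_zero
    have hmk0 : ((m - k).factorial : ℝ) ≠ 0 := by exact_mod_cast (m - k).factorial_ne_zero
    have hch : (m.choose k : ℝ) ≠ 0 := by
      exact_mod_cast (Nat.choose_pos hkm).ne'
    rw [hmf]
    field_simp
  rw [Finset.sum_congr rfl hterm, ← Finset.sum_div]
  exact div_le_div_of_nonneg_right KEY hfac.le

end PerM

end Stmt13Aux

open Stmt13Aux

/-- Supermultiplicative dissymmetry theorem: for nonnegative, relabeling-invariant,
supermultiplicative weights `a` on labeled trees, if the rooted partition function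
`Y = Σ_T |T|·a_T/|T|!` (summing over labeled trees) converges, then
`Y - Y^u ≥ (1/2)Y²` and hence `Y^u ≤ 1/2`, where `Y^u = Σ_T a_T/|T|!`. -/
theorem stmt13
    (a : (m : ℕ) → SimpleGraph (Fin m) → ℝ)
    (hnn : ∀ m G, 0 ≤ a m G)
    (hinv : ∀ m (G G' : SimpleGraph (Fin m)), Nonempty (G ≃g G') → a m G = a m G')
    (hsuper : ∀ (m₁ m₂ : ℕ) (T₁ : SimpleGraph (Fin m₁)) (T₂ : SimpleGraph (Fin m₂))
        (W : SimpleGraph (Fin (m₁ + m₂))) (x y : Fin (m₁ + m₂)),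
      W.IsTree → W.Adj x y →
      Nonempty ((W.induce {w | (W.deleteEdges {s(x, y)}).Reachable x w}) ≃g T₁) →
      Nonempty ((W.induce {w | (W.deleteEdges {s(x, y)}).Reachable y w}) ≃g T₂) →
      a m₁ T₁ * a m₂ T₂ ≤ a (m₁ + m₂) W)
    (hsum : Summable (fun m : ℕ => ∑ G : SimpleGraph (Fin m),
      if G.IsTree then (m : ℝ) * a m G / (Nat.factorial m) else 0)) :
    (1/2) * (∑' m : ℕ, ∑ G : SimpleGraph (Fin m),
        if G.IsTree then (m : ℝ) * a m G / (Nat.factorial m) else 0) ^ 2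
      ≤ (∑' m : ℕ, ∑ G : SimpleGraph (Fin m),
          if G.IsTree then (m : ℝ) * a m G / (Nat.factorial m) else 0)
        - (∑' m : ℕ, ∑ G : SimpleGraph (Fin m),
            if G.IsTree then a m G / (Nat.factorial m) else 0) ∧
    (∑' m : ℕ, ∑ G : SimpleGraph (Fin m),
        if G.IsTree then a m G / (Nat.factorial m) else 0) ≤ 1/2 := by
  classical
  have hsuper' : ∀ (n : ℕ) (W : SimpleGraph (Fin n)) (x y : Fin n), W.IsTree → W.Adj x y →
      ∀ (n₁ n₂ : ℕ) (T₁ : SimpleGraph (Fin n₁)) (T₂ : SimpleGraph (Fin n₂)), n₁ + n₂ = n →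
      Nonempty ((W.induce {w | (W.deleteEdges {s(x, y)}).Reachable x w}) ≃g T₁) →
      Nonempty ((W.induce {w | (W.deleteEdges {s(x, y)}).Reachable y w}) ≃g T₂) →
      a n₁ T₁ * a n₂ T₂ ≤ a n W := by
    intro n W x y ht hadj n₁ n₂ T₁ T₂ hn h1 h2
    subst hn
    exact hsuper n₁ n₂ T₁ T₂ W x y ht hadj h1 h2
  set t : ℕ → ℝ := fun m => ∑ G : SimpleGraph (Fin m),
    if G.IsTree then (m : ℝ) * a m G / (Nat.factorial m) else 0 with htdef
  set u : ℕ → ℝ := fun m => ∑ G : SimpleGraph (Fin m),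
    if G.IsTree then a m G / (Nat.factorial m) else 0 with hudef
  have ht_eq : ∀ m, t m = (m : ℝ) * fval a m / (m.factorial : ℝ) := by
    intro m
    rw [htdef]
    simp only []
    unfold fval
    rw [Finset.mul_sum, Finset.sum_div]
    refine Finset.sum_congr rfl fun G _ => ?_
    split_ifs with h
    · rfl
    · simp
  have hu_eq : ∀ m, u m = fval a m / (m.factorial : ℝ) := by
    intro m
    rw [hudef]
    simp only []
    unfold fval
    rw [Finset.sum_div]
    refine Finset.sum_congr rfl fun G _ => ?_
    split_ifs with h
    · rfl
    · simp
  have hfnn := fval_nonneg a hnn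
  have hfacpos : ∀ m : ℕ, (0 : ℝ) < (m.factorial : ℝ) := by
    intro m; exact_mod_cast m.factorial_pos
  have htnn : ∀ m, 0 ≤ t m := by
    intro m; rw [ht_eq]
    exact div_nonneg (mul_nonneg (Nat.cast_nonneg m) (hfnn m)) (hfacpos m).le
  have hunn : ∀ m, 0 ≤ u m := by
    intro m; rw [hu_eq]
    exact div_nonneg (hfnn m) (hfacpos m).le
  have hut : ∀ m, u m ≤ t m := by
    intro m
    rw [ht_eq, hu_eq]
    rcases Nat.eq_zero_or_pos m with rfl | hm
    · rw [fval_zero]; simp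
    · have h1 : (1 : ℝ) ≤ (m : ℝ) := by exact_mod_cast hm
      have := hfnn m
      have := hfacpos m
      rw [div_le_div_iff₀ this this]
      nlinarith [mul_nonneg (mul_nonneg (sub_nonneg.mpr h1) (hfnn m)) this.le]
  have hu_sum : Summable u := Summable.of_nonneg_of_le hunn hut hsum
  have hnorm : Summable fun m => ‖t m‖ := by
    have : (fun m => ‖t m‖) = t := funext fun m => Real.norm_of_nonneg (htnn m)
    rw [this]; exact hsum
  have hprod : (∑' m, t m) * (∑' m, t m)
      = ∑' m, ∑ kl ∈ Finset.HasAntidiagonal.antidiagonal m, t kl.1 * t kl.2 :=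
    tsum_mul_tsum_eq_tsum_sum_antidiagonal_of_summable_norm hnorm hnorm
  have hsumc : Summable fun m => ∑ kl ∈ Finset.HasAntidiagonal.antidiagonal m, t kl.1 * t kl.2 :=
    summable_sum_mul_antidiagonal_of_summable_mul
      (summable_mul_of_summable_norm hnorm hnorm)
  have hperm : ∀ m, (1/2 : ℝ) * (∑ kl ∈ Finset.HasAntidiagonal.antidiagonal m, t kl.1 * t kl.2)
      ≤ t m - u m := by
    intro m
    have h1 := key_div a hnn hsuper' m
    have h2 : ∀ kl ∈ Finset.HasAntidiagonal.antidiagonal m, t kl.1 * t kl.2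
        = ((kl.1 : ℝ) * fval a kl.1 / (kl.1.factorial : ℝ)) *
          ((kl.2 : ℝ) * fval a kl.2 / (kl.2.factorial : ℝ)) := by
      intro kl _
      rw [ht_eq, ht_eq]
    rw [Finset.sum_congr rfl h2]
    have h3 : t m - u m = 2 * ((m : ℝ) - 1) * fval a m / (m.factorial : ℝ) / 2 := by
      rw [ht_eq, hu_eq]
      ring
    rw [h3]
    linarith
  have main1 : (1/2 : ℝ) * (∑' m, t m) ^ 2 ≤ (∑' m, t m) - (∑' m, u m) := by
    have hL : (∑' m, t m) ^ 2 = ∑' m, ∑ kl ∈ Finset.HasAntidiagonal.antidiagonal m, t kl.1 * t kl.2 := by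
      rw [sq, hprod]
    rw [hL, ← tsum_mul_left, ← Summable.tsum_sub hsum hu_sum]
    exact Summable.tsum_le_tsum hperm (hsumc.mul_left _) (hsum.sub hu_sum)
  refine ⟨main1, ?_⟩
  have hY0 : 0 ≤ ∑' m, t m := tsum_nonneg htnn
  nlinarith [sq_nonneg ((∑' m, t m) - 1), main1]
end

section
/- For d ≥ 1 and integers w, q ≥ 1 with w + 2q ≤ n, the set Γ₀ = {β ∈ {0,...,n−1}ᵈ : ∃ coordinate j and integer k ≥ 1 with k(w+2q) − 2q ≤ βⱼ < k(w+2q)} has complement of size at least w^d·(n/(w+2q) − 1)^d ≥ (1 − (w+2q)/n)^d·(1 + 2q/w)^{−d}·n^d; moreover the complement is a disjoint union of K = (⌊n/(w+2q)⌋)ᵈ-type axis-parallel boxes of width w that are pairwise at L^∞-distance greater than 2q. -/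
lemma aux19_slab (w q x : ℕ) (hw : 1 ≤ w) :
    (∃ k : ℕ, 1 ≤ k ∧ k * (w + 2 * q) - 2 * q ≤ x ∧ x < k * (w + 2 * q)) ↔
      w ≤ x % (w + 2 * q) := by
  set s := w + 2 * q with hs
  have hspos : 0 < s := by omega
  constructor
  · rintro ⟨k, hk1, hk2, hk3⟩
    have hks : (k - 1) * s + s = k * s := by
      have h := (Nat.succ_mul (k - 1) s).symm
      rwa [Nat.succ_eq_add_one, Nat.sub_add_cancel hk1] at h
    have hdiv : x / s = k - 1 := Nat.div_eq_of_lt_le (by omega) (by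
      have : (k - 1 + 1) * s = (k - 1) * s + s := Nat.succ_mul _ _
      omega)
    have hmod := Nat.div_add_mod x s
    have hc : s * (x / s) = (k - 1) * s := by rw [hdiv, Nat.mul_comm]
    omega
  · intro h
    have hmod := Nat.div_add_mod x s
    have h2 : x % s < s := Nat.mod_lt _ hspos
    refine ⟨x / s + 1, Nat.le_add_left 1 _, ?_, ?_⟩ <;>
    · have hc : (x / s + 1) * s = s * (x / s) + s := by ring
      generalize s * (x / s) = a at hc hmod
      generalize (x / s + 1) * s = b at hc
      omega

lemma aux19_box (w q x : ℕ) (hw : 1 ≤ w) :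
    x % (w + 2 * q) < w ↔ ∃ κ : ℕ, κ * (w + 2 * q) ≤ x ∧ x < κ * (w + 2 * q) + w := by
  set s := w + 2 * q with hs
  have hspos : 0 < s := by omega
  constructor
  · intro h
    have hmod := Nat.div_add_mod x s
    refine ⟨x / s, ?_, ?_⟩ <;>
    · have hc : (x / s) * s = s * (x / s) := Nat.mul_comm _ _
      generalize s * (x / s) = a at hc hmod
      generalize (x / s) * s = b at hc
      omega
  · rintro ⟨κ, h1, h2⟩
    have hdiv : x / s = κ := Nat.div_eq_of_lt_le h1 (by
      have : (κ + 1) * s = κ * s + s := Nat.succ_mul _ _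
      omega)
    have hmod := Nat.div_add_mod x s
    have hc : s * (x / s) = κ * s := by rw [hdiv, Nat.mul_comm]
    omega

/-- The grid set `Γ₀ ⊆ {0,…,n-1}^d` of slabs of width `2q` spaced every `w + 2q` has
complement of size at least `w^d(n/(w+2q) - 1)^d ≥ (1-(w+2q)/n)^d(1+2q/w)^{-d}n^d`;
moreover, the complement is the union of axis-parallel boxes of width `w` whose lower
corners have coordinates multiples of `w+2q`, and the `q`-neighbourhoods of distinct such
boxes are pairwise disjoint (the boxes are more than `2q` apart). -/
theorem stmt19 (d n w q : ℕ) (hd : 1 ≤ d) (hw : 1 ≤ w) (hq : 1 ≤ q)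
    (hn : w + 2 * q ≤ n)
    (Γ₀ : Set (Fin d → Fin n))
    (hΓ : Γ₀ = {β | ∃ j : Fin d, ∃ k : ℕ, 1 ≤ k ∧
      k * (w + 2 * q) - 2 * q ≤ (β j : ℕ) ∧ (β j : ℕ) < k * (w + 2 * q)}) :
    (w : ℝ) ^ d * ((n : ℝ) / (w + 2 * q) - 1) ^ d ≤ (Γ₀ᶜ.ncard : ℝ) ∧
    (1 - ((w : ℝ) + 2 * q) / n) ^ d * ((1 + 2 * (q : ℝ) / w) ^ d)⁻¹ * (n : ℝ) ^ d
      ≤ (Γ₀ᶜ.ncard : ℝ) ∧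
    Γ₀ᶜ = (⋃ κ : Fin d → ℕ, {β : Fin d → Fin n |
      ∀ j, κ j * (w + 2 * q) ≤ (β j : ℕ) ∧ (β j : ℕ) < κ j * (w + 2 * q) + w}) ∧
    ∀ κ κ' : Fin d → ℕ, κ ≠ κ' →
      Disjoint
        {β : Fin d → Fin n | ∀ j,
          (κ j * (w + 2 * q) : ℤ) - q ≤ ((β j : ℕ) : ℤ) ∧
          ((β j : ℕ) : ℤ) < κ j * (w + 2 * q) + w + q}
        {β : Fin d → Fin n | ∀ j,
          (κ' j * (w + 2 * q) : ℤ) - q ≤ ((β j : ℕ) : ℤ) ∧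
          ((β j : ℕ) : ℤ) < κ' j * (w + 2 * q) + w + q} := by
  classical
  have hspos : 0 < w + 2 * q := by omega
  have hn0 : 0 < n := lt_of_lt_of_le hspos hn
  -- complement characterization
  have hcompl : Γ₀ᶜ = {β : Fin d → Fin n | ∀ j, (β j : ℕ) % (w + 2 * q) < w} := by
    ext β
    rw [hΓ, Set.mem_compl_iff, Set.mem_setOf_eq, Set.mem_setOf_eq, not_exists]
    apply forall_congr'
    intro j
    rw [aux19_slab w q ((β j : ℕ)) hw]
    exact not_le
  -- union decomposition
  have hunion : Γ₀ᶜ = (⋃ κ : Fin d → ℕ, {β : Fin d → Fin n |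
      ∀ j, κ j * (w + 2 * q) ≤ (β j : ℕ) ∧ (β j : ℕ) < κ j * (w + 2 * q) + w}) := by
    rw [hcompl]
    ext β
    simp only [Set.mem_setOf_eq, Set.mem_iUnion]
    constructor
    · intro h
      choose κ hκ using fun j => (aux19_box w q ((β j : ℕ)) hw).mp (h j)
      exact ⟨κ, hκ⟩
    · rintro ⟨κ, hκ⟩ j
      exact (aux19_box w q ((β j : ℕ)) hw).mpr ⟨κ j, hκ j⟩
  -- counting
  let C : Finset (Fin n) := Finset.univ.filter (fun x : Fin n => (x : ℕ) % (w + 2 * q) < w)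
  have hset : Γ₀ᶜ = ↑(Fintype.piFinset fun _ : Fin d => C) := by
    rw [hcompl]
    ext β
    simp [C, Fintype.mem_piFinset]
  have hcard : Γ₀ᶜ.ncard = C.card ^ d := by
    rw [hset, Set.ncard_coe_finset, Fintype.card_piFinset]
    simp
  set m := n / (w + 2 * q) with hm
  have hmn : m * (w + 2 * q) ≤ n := Nat.div_mul_le_self n _
  have hCcard : w * m ≤ C.card := by
    have hbound : ∀ p : ℕ × ℕ, p ∈ Finset.range w ×ˢ Finset.range m →
        p.1 + p.2 * (w + 2 * q) < n := by
      rintro ⟨a, b⟩ hp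
      simp only [Finset.mem_product, Finset.mem_range] at hp
      have h1 : (b + 1) * (w + 2 * q) ≤ m * (w + 2 * q) :=
        Nat.mul_le_mul_right _ (by omega)
      have h2 : (b + 1) * (w + 2 * q) = b * (w + 2 * q) + (w + 2 * q) := Nat.succ_mul _ _
      show a + b * (w + 2 * q) < n
      omega
    have hinj := Finset.card_le_card_of_injOn
      (f := fun p : ℕ × ℕ => (⟨(p.1 + p.2 * (w + 2 * q)) % n, Nat.mod_lt _ hn0⟩ : Fin n))
      (s := Finset.range w ×ˢ Finset.range m) (t := C) ?_ ?_
    · calc w * m = (Finset.range w ×ˢ Finset.range m).card := by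
            rw [Finset.card_product, Finset.card_range, Finset.card_range]
        _ ≤ C.card := hinj
    · rintro ⟨a, b⟩ hp
      have hlt := hbound _ hp
      simp only [Finset.mem_coe, Finset.mem_product, Finset.mem_range] at hp
      simp only [C, Finset.mem_coe, Finset.mem_filter, Finset.mem_univ, true_and]
      rw [Nat.mod_eq_of_lt hlt, Nat.add_mul_mod_self_right, Nat.mod_eq_of_lt (by omega)]
      exact hp.1
    · rintro ⟨a, b⟩ hp ⟨a', b'⟩ hp' heq
      have hlt := hbound _ hp
      have hlt' := hbound _ hp'
      simp only [Finset.coe_product, Set.mem_prod, Finset.mem_coe, Finset.mem_range] at hp hp'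
      have hv : a + b * (w + 2 * q) = a' + b' * (w + 2 * q) := by
        have := congrArg (fun x : Fin n => (x : ℕ)) heq
        simpa [Nat.mod_eq_of_lt hlt, Nat.mod_eq_of_lt hlt'] using this
      have ha : a = a' := by
        have h1 : (a + b * (w + 2 * q)) % (w + 2 * q) = a := by
          rw [Nat.add_mul_mod_self_right, Nat.mod_eq_of_lt (by omega)]
        have h2 : (a' + b' * (w + 2 * q)) % (w + 2 * q) = a' := by
          rw [Nat.add_mul_mod_self_right, Nat.mod_eq_of_lt (by omega)]
        rw [hv] at h1
        rw [h1] at h2  -- careful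
        exact h2.symm ▸ rfl
      have hb : b = b' := by
        have : b * (w + 2 * q) = b' * (w + 2 * q) := by omega
        exact Nat.eq_of_mul_eq_mul_right hspos this
      simp [Prod.ext_iff, ha, hb]
  -- real bounds
  have hsR : (0:ℝ) < (w:ℝ) + 2 * q := by positivity
  have hnR : ((w:ℝ) + 2 * q) ≤ n := by exact_mod_cast hn
  have hmreal : (n : ℝ) / ((w:ℝ) + 2 * q) - 1 ≤ (m : ℝ) := by
    have hlt : n < (m + 1) * (w + 2 * q) := by
      have hmod := Nat.div_add_mod n (w + 2 * q)
      have h2 : n % (w + 2 * q) < w + 2 * q := Nat.mod_lt _ hspos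
      have h3 : (m + 1) * (w + 2 * q) = (w + 2 * q) * (n / (w + 2 * q)) + (w + 2 * q) := by
        rw [hm]; ring
      omega
    have h1 : (n : ℝ) < ((m : ℝ) + 1) * ((w:ℝ) + 2 * q) := by exact_mod_cast hlt
    rw [sub_le_iff_le_add, div_le_iff₀ hsR]
    linarith
  have hbase : 0 ≤ (n : ℝ) / ((w:ℝ) + 2 * q) - 1 := by
    rw [sub_nonneg, le_div_iff₀ hsR]
    linarith
  have hineq1 : (w : ℝ) ^ d * ((n : ℝ) / (w + 2 * q) - 1) ^ d ≤ (Γ₀ᶜ.ncard : ℝ) := by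
    rw [hcard]
    push_cast
    rw [← mul_pow]
    apply pow_le_pow_left₀ (mul_nonneg (by positivity) hbase)
    calc (w : ℝ) * ((n : ℝ) / ((w:ℝ) + 2 * q) - 1) ≤ (w : ℝ) * m :=
          mul_le_mul_of_nonneg_left hmreal (by positivity)
      _ ≤ (C.card : ℝ) := by exact_mod_cast hCcard
  refine ⟨hineq1, ?_, hunion, ?_⟩
  · have heq : (1 - ((w : ℝ) + 2 * q) / n) ^ d * ((1 + 2 * (q : ℝ) / w) ^ d)⁻¹ * (n : ℝ) ^ d
        = (w : ℝ) ^ d * ((n : ℝ) / (w + 2 * q) - 1) ^ d := by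
      rw [← inv_pow, ← mul_pow, ← mul_pow, ← mul_pow]
      congr 1
      have hw0 : (w : ℝ) ≠ 0 := by positivity
      have hn0' : (n : ℝ) ≠ 0 := by positivity
      have hs0 : ((w:ℝ) + 2 * q) ≠ 0 := by positivity
      have hinv : (1 + 2 * (q : ℝ) / w)⁻¹ = (w : ℝ) / ((w:ℝ) + 2 * q) := by
        rw [show (1 + 2 * (q : ℝ) / w) = ((w:ℝ) + 2 * q) / w by field_simp, inv_div]
      rw [hinv]
      field_simp
    rw [heq]
    exact hineq1
  · intro κ κ' hne
    rw [Set.disjoint_left]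
    intro β h1 h2
    have hex : ∃ j, κ j ≠ κ' j := by
      by_contra hc
      push_neg at hc
      exact hne (funext hc)
    obtain ⟨j, hj⟩ := hex
    obtain ⟨a1, a2⟩ := h1 j
    obtain ⟨b1, b2⟩ := h2 j
    rcases lt_or_gt_of_ne hj with h | h
    · have hle : ((κ j : ℤ) + 1) * ((w:ℤ) + 2 * q) ≤ (κ' j : ℤ) * ((w:ℤ) + 2 * q) := by
        apply mul_le_mul_of_nonneg_right
        · exact_mod_cast h
        · positivity
      have hexp : ((κ j : ℤ) + 1) * ((w:ℤ) + 2 * q)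
          = (κ j : ℤ) * ((w:ℤ) + 2 * q) + ((w:ℤ) + 2 * q) := by ring
      linarith
    · have hle : ((κ' j : ℤ) + 1) * ((w:ℤ) + 2 * q) ≤ (κ j : ℤ) * ((w:ℤ) + 2 * q) := by
        apply mul_le_mul_of_nonneg_right
        · exact_mod_cast h
        · positivity
      have hexp : ((κ' j : ℤ) + 1) * ((w:ℤ) + 2 * q)
          = (κ' j : ℤ) * ((w:ℤ) + 2 * q) + ((w:ℤ) + 2 * q) := by ring
      linarith
end
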